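/- arXiv:2209.09668 — 6 statements merged into one kernel-verified Lean document; each statement's English description precedes it below -/
import Mathlib

section
/- Let f : 2^N → ℝ≥0 be a normalized, monotone, submodular function with curvature c ∈ [0,1]. Then for all disjoint sets A, B ⊆ N, we have f(A ∪ B) ≥ f(A) + (1-c)·∑_{i∈B} f({i}). -/
open Finset

/-- Lemma 1(ii): curvature lower bound for disjoint unions. -/
theorem curvature_union_bound {ι : Type*} [DecidableEq ι]
    (N : Finset ι) (hN : N.Nonempty) (f : Finset ι → ℝ)
    (hnorm : f ∅ = 0)
    (hmono : ∀ A B : Finset ι, A ⊆ B → B ⊆ N → f A ≤ f B)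
    (hsub : ∀ A B : Finset ι, A ⊆ N → B ⊆ N → f A + f B ≥ f (A ∪ B) + f (A ∩ B))
    (hfpos : ∀ j ∈ N, 0 < f {j})
    (c : ℝ)
    (hc : c = 1 - N.inf' hN (fun j => (f N - f (N.erase j)) / f {j}))
    (hc0 : 0 ≤ c) (hc1 : c ≤ 1) :
    ∀ A B : Finset ι, A ⊆ N → B ⊆ N → Disjoint A B →
      f (A ∪ B) ≥ f A + (1 - c) * ∑ i ∈ B, f {i} := by
  -- marginal gain lemma
  have hmarg : ∀ j ∈ N, ∀ S : Finset ι, S ⊆ N.erase j →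
      f (insert j S) - f S ≥ (1 - c) * f {j} := by
    intro j hj S hS
    have hsub1 := hsub (insert j S) (N.erase j)
      (insert_subset hj (hS.trans (erase_subset j N))) (erase_subset j N)
    have hU : insert j S ∪ N.erase j = N := by
      rw [insert_union, union_eq_right.mpr hS, insert_erase hj]
    have hI : insert j S ∩ N.erase j = S := by
      ext x
      simp only [mem_inter, mem_insert, mem_erase]
      constructor
      · rintro ⟨hx1 | hx1, hx2, _⟩
        · exact (hx2 hx1).elim
        · exact hx1
      · intro hx
        exact ⟨Or.inr hx, (mem_erase.mp (hS hx)).1, (mem_erase.mp (hS hx)).2⟩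
    rw [hU, hI] at hsub1
    have hle : (1 - c) ≤ (f N - f (N.erase j)) / f {j} := by
      have h := inf'_le (fun j => (f N - f (N.erase j)) / f {j}) hj
      rw [hc]
      linarith
    have hp := hfpos j hj
    have := (le_div_iff₀ hp).mp hle
    linarith
  intro A B hA hB hdisj
  induction B using Finset.induction_on with
  | empty => simp [hnorm]
  | @insert i B' hi ih =>
    have hiN : i ∈ N := hB (mem_insert_self i B')
    have hB'N : B' ⊆ N := (subset_insert i B').trans hB
    have hdisj' : Disjoint A B' := hdisj.mono_right (subset_insert i B')
    have hiA : i ∉ A := fun h => (disjoint_left.mp hdisj h) (mem_insert_self i B')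
    have hsubE : A ∪ B' ⊆ N.erase i := by
      intro x hx
      rcases mem_union.mp hx with h | h
      · exact mem_erase.mpr ⟨fun he => hiA (he ▸ h), hA h⟩
      · exact mem_erase.mpr ⟨fun he => hi (he ▸ h), hB'N h⟩
    have hm := hmarg i hiN (A ∪ B') hsubE
    have ihh := ih hB'N hdisj'
    have heq : A ∪ insert i B' = insert i (A ∪ B') := union_insert i A B'
    rw [heq, Finset.sum_insert hi]
    have h1c : 0 ≤ 1 - c := by linarith
    linarith
end

section
/- Greedy increment bound (Lemma 2(ii)): Let f be normalized, monotone, submodular with curvature c on finite item set N with sizes s(i) > 0 and capacity γ. Let i₁,…,i_{k+1} be the greedy order (i_j maximizes marginal density (f(G_{j-1}∪{i}) - f(G_{j-1}))/s(i) over remaining items of size ≤ γ), G_j = {i₁,…,i_j}, δ_j = f(G_j) - f(G_{j-1}), and let Opt be a feasible optimal set (s(Opt) ≤ γ). Assume G_k ≠ Opt. Then for all j ∈ {1,…,k+1}: δ_j ≥ (s_j / (γ - (1-c)·s(G_{j-1}))) · (f(Opt) - ∑_{m=1}^{j-1} δ_m). -/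
open Finset

lemma submod_sum_marg {ι : Type*} [DecidableEq ι] (N : Finset ι) (f : Finset ι → ℝ)
    (hsub : ∀ A B : Finset ι, A ⊆ N → B ⊆ N → f A + f B ≥ f (A ∪ B) + f (A ∩ B)) :
    ∀ S : Finset ι, S ⊆ N → ∀ Gs : Finset ι, Gs ⊆ N → Disjoint S Gs →
      f (Gs ∪ S) ≤ f Gs + ∑ x ∈ S, (f (insert x Gs) - f Gs) := by
  intro S
  induction S using Finset.induction_on with
  | empty => intro _ Gs _ _; simp
  | @insert a S haS0 IH =>
    intro hSN Gs hGN hdisj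
    have haS : a ∉ S := haS0
    have haN : a ∈ N := hSN (mem_insert_self a S)
    have hSN' : S ⊆ N := (subset_insert a S).trans hSN
    have hdisj' : Disjoint S Gs := hdisj.mono_left (subset_insert a S)
    have haG : a ∉ Gs := (Finset.disjoint_left.mp hdisj) (mem_insert_self a S)
    have key := hsub (Gs ∪ S) (insert a Gs) (union_subset hGN hSN')
      (insert_subset haN hGN)
    have hu : (Gs ∪ S) ∪ insert a Gs = insert a (Gs ∪ S) := by
      ext y; simp only [mem_union, mem_insert]; tauto
    have hi : (Gs ∪ S) ∩ insert a Gs = Gs := by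
      ext y
      simp only [mem_inter, mem_union, mem_insert]
      constructor
      · rintro ⟨h1 | h1, h2 | h2⟩
        · exact h1
        · exact h1
        · exact absurd h1 (h2 ▸ haS)
        · exact h2
      · intro h; exact ⟨Or.inl h, Or.inr h⟩
    rw [hu, hi] at key
    have IH' := IH hSN' Gs hGN hdisj'
    have h2 : Gs ∪ insert a S = insert a (Gs ∪ S) := by
      ext y; simp only [mem_union, mem_insert]; tauto
    rw [h2, Finset.sum_insert haS]
    linarith

lemma submod_sum_curv {ι : Type*} [DecidableEq ι] (N : Finset ι) (f : Finset ι → ℝ)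
    (hsub : ∀ A B : Finset ι, A ⊆ N → B ⊆ N → f A + f B ≥ f (A ∪ B) + f (A ∩ B)) :
    ∀ S : Finset ι, S ⊆ N → ∀ A : Finset ι, A ⊆ N → Disjoint S A →
      f A + ∑ x ∈ S, (f N - f (N.erase x)) ≤ f (A ∪ S) := by
  intro S
  induction S using Finset.induction_on with
  | empty => intro _ A _ _; simp
  | @insert a S haS0 IH =>
    intro hSN A hAN hdisj
    have haS : a ∉ S := haS0
    have haN : a ∈ N := hSN (mem_insert_self a S)
    have hSN' : S ⊆ N := (subset_insert a S).trans hSN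
    have hdisj' : Disjoint S A := hdisj.mono_left (subset_insert a S)
    have haA : a ∉ A := (Finset.disjoint_left.mp hdisj) (mem_insert_self a S)
    have haAS : a ∉ A ∪ S := by simp [haA, haS]
    have hASN : A ∪ S ⊆ N := union_subset hAN hSN'
    have key := hsub (insert a (A ∪ S)) (N.erase a) (insert_subset haN hASN)
      (erase_subset a N)
    have hu : insert a (A ∪ S) ∪ N.erase a = N := by
      apply Finset.Subset.antisymm
      · exact union_subset (insert_subset haN hASN) (erase_subset a N)
      · intro y hy
        by_cases hya : y = a
        · simp [hya]
        · simp [mem_erase, hya, hy]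
    have hi : insert a (A ∪ S) ∩ N.erase a = A ∪ S := by
      ext y
      simp only [mem_inter, mem_insert, mem_erase]
      constructor
      · rintro ⟨h1 | h1, h2, _⟩
        · exact absurd h1 h2
        · exact h1
      · intro h
        exact ⟨Or.inr h, fun hya => haAS (hya ▸ h), hASN h⟩
    rw [hu, hi] at key
    have IH' := IH hSN' A hAN hdisj'
    have h2 : A ∪ insert a S = insert a (A ∪ S) := by
      ext y; simp only [mem_union, mem_insert]; tauto
    rw [h2, Finset.sum_insert haS]
    linarith


/-- Lemma 2(ii): greedy increment bound. -/
theorem greedy_increment_bound_ii {ι : Type*} [DecidableEq ι]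
    (N : Finset ι) (hN : N.Nonempty) (s : ι → ℝ) (f : Finset ι → ℝ)
    (γ c : ℝ) (k : ℕ) (i : ℕ → ι) (G : ℕ → Finset ι) (Opt : Finset ι)
    (hγ : 0 < γ) (hc0 : 0 ≤ c) (hc1 : c ≤ 1)
    (hspos : ∀ x ∈ N, 0 < s x)
    (hnorm : f ∅ = 0)
    (hmono : ∀ A B : Finset ι, A ⊆ B → B ⊆ N → f A ≤ f B)
    (hsub : ∀ A B : Finset ι, A ⊆ N → B ⊆ N → f A + f B ≥ f (A ∪ B) + f (A ∩ B))
    (hfpos : ∀ x ∈ N, 0 < f {x})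
    (hc : c = 1 - N.inf' hN (fun x => (f N - f (N.erase x)) / f {x}))
    (hG0 : G 0 = ∅)
    (hGsucc : ∀ j : ℕ, G (j + 1) = insert (i (j + 1)) (G j))
    (hmem : ∀ j : ℕ, 1 ≤ j → j ≤ k + 1 → i j ∈ N \ G (j - 1))
    (hfit : ∀ j : ℕ, 1 ≤ j → j ≤ k + 1 → s (i j) ≤ γ)
    (hGkfit : ∑ x ∈ G k, s x ≤ γ)
    (hgreedy : ∀ j : ℕ, 1 ≤ j → j ≤ k + 1 → ∀ x ∈ N \ G (j - 1), s x ≤ γ →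
      (f (insert x (G (j - 1))) - f (G (j - 1))) / s x ≤
      (f (insert (i j) (G (j - 1))) - f (G (j - 1))) / s (i j))
    (hOptsub : Opt ⊆ N) (hOptfeas : ∑ x ∈ Opt, s x ≤ γ)
    (hOptopt : ∀ B : Finset ι, B ⊆ N → ∑ x ∈ B, s x ≤ γ → f B ≤ f Opt)
    (hne : G k ≠ Opt) :
    ∀ j : ℕ, 1 ≤ j → j ≤ k + 1 →
      f (G j) - f (G (j - 1)) ≥
        s (i j) / (γ - (1 - c) * ∑ x ∈ G (j - 1), s x) *
          (f Opt - ∑ m ∈ Finset.Icc 1 (j - 1), (f (G m) - f (G (m - 1)))) := by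
  classical
  have hGN : ∀ t, t ≤ k + 1 → G t ⊆ N := by
    intro t
    induction t with
    | zero => intro _; simp [hG0]
    | succ n ih =>
      intro h
      have hi : i (n + 1) ∈ N := (mem_sdiff.mp (hmem (n + 1) (by omega) h)).1
      rw [hGsucc n]
      exact insert_subset hi (ih (by omega))
  have hGmono : ∀ a b : ℕ, a ≤ b → G a ⊆ G b := by
    intro a b hab
    induction b with
    | zero => simp [Nat.le_zero.mp hab]
    | succ n ih =>
      rcases Nat.lt_or_ge a (n + 1) with h | h
      · exact (ih (by omega)).trans (by rw [hGsucc n]; exact subset_insert _ _)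
      · have : a = n + 1 := by omega
        simp [this]
  have hinot : ∀ t, 1 ≤ t → t ≤ k + 1 → i t ∉ G (t - 1) :=
    fun t h1 h2 => (mem_sdiff.mp (hmem t h1 h2)).2
  have hiN : ∀ t, 1 ≤ t → t ≤ k + 1 → i t ∈ N :=
    fun t h1 h2 => (mem_sdiff.mp (hmem t h1 h2)).1
  have hGeq : ∀ t, 1 ≤ t → G t = insert (i t) (G (t - 1)) := by
    intro t h1
    obtain ⟨t', rfl⟩ : ∃ t', t = t' + 1 := ⟨t - 1, by omega⟩
    simpa using hGsucc t'
  have hδnn : ∀ t, 1 ≤ t → t ≤ k + 1 → 0 ≤ f (G t) - f (G (t - 1)) := by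
    intro t h1 h2
    have := hmono (G (t - 1)) (G t) (hGmono _ _ (by omega)) (hGN t h2)
    linarith
  have hsipos : ∀ t, 1 ≤ t → t ≤ k + 1 → 0 < s (i t) :=
    fun t h1 h2 => hspos _ (hiN t h1 h2)
  have hmarg : ∀ (A B : Finset ι) (x : ι), A ⊆ B → B ⊆ N → x ∈ N → x ∉ B →
      f (insert x B) - f B ≤ f (insert x A) - f A := by
    intro A B x hAB hBN hxN hxB
    have key := hsub (insert x A) B (insert_subset hxN (hAB.trans hBN)) hBN
    have hu : insert x A ∪ B = insert x B := by
      rw [Finset.insert_union, Finset.union_eq_right.mpr hAB]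
    have hi2 : insert x A ∩ B = A := by
      rw [Finset.insert_inter_of_notMem hxB, Finset.inter_eq_left.mpr hAB]
    rw [hu, hi2] at key
    linarith
  have hdens : ∀ a b : ℕ, 1 ≤ a → a ≤ b → b ≤ k + 1 →
      (f (G b) - f (G (b - 1))) / s (i b) ≤ (f (G a) - f (G (a - 1))) / s (i a) := by
    intro a b h1
    induction b with
    | zero => intro hab _; omega
    | succ n ih =>
      intro hab hbk
      rcases Nat.lt_or_ge a (n + 1) with h | h
      · have hn1 : 1 ≤ n := by omega
        have hnk : n ≤ k + 1 := by omega
        have step : (f (G (n + 1)) - f (G (n + 1 - 1))) / s (i (n + 1)) ≤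
            (f (G n) - f (G (n - 1))) / s (i n) := by
          simp only [Nat.add_sub_cancel]
          have hx : i (n + 1) ∈ N \ G (n - 1) := by
            rw [mem_sdiff]
            exact ⟨hiN (n + 1) (by omega) hbk,
              fun hmem' => hinot (n + 1) (by omega) hbk (hGmono (n - 1) n (by omega) hmem')⟩
          have hg := hgreedy n hn1 hnk (i (n + 1)) hx (hfit (n + 1) (by omega) hbk)
          rw [← hGeq n hn1] at hg
          refine le_trans ?_ hg
          have hnum : f (G (n + 1)) - f (G n) ≤
              f (insert (i (n + 1)) (G (n - 1))) - f (G (n - 1)) := by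
            have h3 := hmarg (G (n - 1)) (G n) (i (n + 1)) (hGmono _ _ (by omega))
              (hGN n hnk) (hiN (n + 1) (by omega) hbk) (hinot (n + 1) (by omega) hbk)
            have h4 : G (n + 1) = insert (i (n + 1)) (G n) := hGsucc n
            rw [← h4] at h3
            simpa using h3
          exact (div_le_div_iff_of_pos_right (hsipos (n + 1) (by omega) hbk)).mpr hnum
        exact le_trans step (ih (by omega) (by omega))
      · have : a = n + 1 := by omega
        subst this
        exact le_refl _
  have hGmem : ∀ t, ∀ x ∈ G t, ∃ m, 1 ≤ m ∧ m ≤ t ∧ x = i m := by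
    intro t
    induction t with
    | zero => intro x hx; rw [hG0] at hx; exact absurd hx (notMem_empty x)
    | succ n ih =>
      intro x hx
      rw [hGsucc n, mem_insert] at hx
      rcases hx with h | h
      · exact ⟨n + 1, by omega, le_refl _, h⟩
      · obtain ⟨m, hm1, hm2, hm3⟩ := ih x h
        exact ⟨m, hm1, by omega, hm3⟩
  have htel : ∀ t, ∑ m ∈ Finset.Icc 1 t, (f (G m) - f (G (m - 1))) = f (G t) := by
    intro t
    induction t with
    | zero => simp [hG0, hnorm]
    | succ n ih =>
      rw [Finset.sum_Icc_succ_top (by omega), ih]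
      simp
  intro j hj1 hj2
  rw [htel (j - 1)]
  have hsj : 0 < s (i j) := hsipos j hj1 hj2
  have hθnn : 0 ≤ (f (G j) - f (G (j - 1))) / s (i j) :=
    div_nonneg (hδnn j hj1 hj2) hsj.le
  set Gp := G (j - 1) with hGpdef
  set θ := (f (G j) - f Gp) / s (i j) with hθ
  have hGpN : Gp ⊆ N := hGN _ (by omega)
  have hGpfit : ∑ x ∈ Gp, s x ≤ γ := by
    refine le_trans (Finset.sum_le_sum_of_subset_of_nonneg (hGmono _ _ (by omega : j - 1 ≤ k))
      (fun x hx _ => (hspos x (hGN k (by omega) hx)).le)) hGkfit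
  have hGpnn : 0 ≤ ∑ x ∈ Gp, s x :=
    Finset.sum_nonneg fun x hx => (hspos x (hGpN hx)).le
  have hGjins : G j = insert (i j) Gp := hGeq j hj1
  -- B1 : greedy + submodularity bound on f (Opt ∪ Gp)
  have hB1 : f (Opt ∪ Gp) ≤ f Gp + θ * ∑ x ∈ Opt \ Gp, s x := by
    have h0 := submod_sum_marg N f hsub (Opt \ Gp) (sdiff_subset.trans hOptsub) Gp hGpN
      sdiff_disjoint
    have hu : Gp ∪ (Opt \ Gp) = Opt ∪ Gp := by
      rw [Finset.union_sdiff_self_eq_union, union_comm]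
    rw [hu] at h0
    refine h0.trans ?_
    have hsum : ∑ x ∈ Opt \ Gp, (f (insert x Gp) - f Gp) ≤ ∑ x ∈ Opt \ Gp, θ * s x := by
      apply Finset.sum_le_sum
      intro x hx
      have hxO : x ∈ Opt := (mem_sdiff.mp hx).1
      have hxN : x ∈ N := hOptsub hxO
      have hxGp : x ∉ Gp := (mem_sdiff.mp hx).2
      have hsx : 0 < s x := hspos x hxN
      have hsxγ : s x ≤ γ := by
        refine le_trans ?_ hOptfeas
        exact Finset.single_le_sum (fun y hy => (hspos y (hOptsub hy)).le) hxO
      have hg := hgreedy j hj1 hj2 x (mem_sdiff.mpr ⟨hxN, hxGp⟩) hsxγ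
      rw [← hGpdef, ← hGjins, ← hθ] at hg
      calc f (insert x Gp) - f Gp = (f (insert x Gp) - f Gp) / s x * s x := by
            field_simp
        _ ≤ θ * s x := mul_le_mul_of_nonneg_right hg hsx.le
    rw [Finset.mul_sum]
    linarith
  -- B2 : curvature chain bound
  have hB2 : f Opt + ∑ x ∈ Gp \ Opt, (f N - f (N.erase x)) ≤ f (Opt ∪ Gp) := by
    have h0 := submod_sum_curv N f hsub (Gp \ Opt) (sdiff_subset.trans hGpN) Opt hOptsub
      sdiff_disjoint
    rwa [Finset.union_sdiff_self_eq_union] at h0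
  -- B3 : per-element curvature lower bound
  have hB3 : ∀ x ∈ Gp \ Opt, (1 - c) * (θ * s x) ≤ f N - f (N.erase x) := by
    intro x hx
    have hxGp : x ∈ Gp := (mem_sdiff.mp hx).1
    have hxN : x ∈ N := hGpN hxGp
    have hfx : 0 < f {x} := hfpos x hxN
    have hcx : 1 - c ≤ (f N - f (N.erase x)) / f {x} := by
      rw [hc, sub_sub_cancel]
      exact Finset.inf'_le _ hxN
    have h1 : (1 - c) * f {x} ≤ f N - f (N.erase x) := (le_div_iff₀ hfx).mp hcx
    obtain ⟨m, hm1, hm2, hxe⟩ := hGmem (j - 1) x hxGp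
    subst hxe
    have hmk : m ≤ k + 1 := by omega
    have hsm : 0 < s (i m) := hsipos m hm1 hmk
    have hδm : f (G m) - f (G (m - 1)) ≤ f {i m} := by
      have h3 := hmarg ∅ (G (m - 1)) (i m) (empty_subset _) (hGN (m - 1) (by omega))
        (hiN m hm1 hmk) (hinot m hm1 hmk)
      rw [← hGeq m hm1] at h3
      simpa [hnorm] using h3
    have hd := hdens m j hm1 (by omega) hj2
    rw [← hGpdef, ← hθ] at hd
    have hfge : θ * s (i m) ≤ f {i m} := by
      calc θ * s (i m) ≤ (f (G m) - f (G (m - 1))) / s (i m) * s (i m) :=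
            mul_le_mul_of_nonneg_right hd hsm.le
        _ = f (G m) - f (G (m - 1)) := by field_simp
        _ ≤ f {i m} := hδm
    calc (1 - c) * (θ * s (i m)) ≤ (1 - c) * f {i m} :=
          mul_le_mul_of_nonneg_left hfge (by linarith)
      _ ≤ f N - f (N.erase (i m)) := h1
  have hsum3 : (1 - c) * (θ * ∑ x ∈ Gp \ Opt, s x) ≤
      ∑ x ∈ Gp \ Opt, (f N - f (N.erase x)) := by
    rw [Finset.mul_sum, Finset.mul_sum]
    exact Finset.sum_le_sum fun x hx => by
      have := hB3 x hx
      linarith [this]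
  -- sums splitting
  have hsplitO : ∑ x ∈ Opt ∩ Gp, s x + ∑ x ∈ Opt \ Gp, s x = ∑ x ∈ Opt, s x :=
    Finset.sum_inter_add_sum_sdiff Opt Gp s
  have hsplitG : ∑ x ∈ Gp ∩ Opt, s x + ∑ x ∈ Gp \ Opt, s x = ∑ x ∈ Gp, s x :=
    Finset.sum_inter_add_sum_sdiff Gp Opt s
  have hic : Gp ∩ Opt = Opt ∩ Gp := inter_comm _ _
  have hPnn : 0 ≤ ∑ x ∈ Opt ∩ Gp, s x :=
    Finset.sum_nonneg fun x hx => (hspos x (hOptsub (mem_inter.mp hx).1)).le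
  have hRnn : 0 ≤ ∑ x ∈ Gp \ Opt, s x :=
    Finset.sum_nonneg fun x hx => (hspos x (hGpN (mem_sdiff.mp hx).1)).le
  have hQnn : 0 ≤ ∑ x ∈ Opt \ Gp, s x :=
    Finset.sum_nonneg fun x hx => (hspos x (hOptsub (mem_sdiff.mp hx).1)).le
  have hmain : f Opt - f Gp ≤ θ * (γ - (1 - c) * ∑ x ∈ Gp, s x) := by
    rw [hic] at hsplitG
    have h5 : f Opt + (1 - c) * (θ * ∑ x ∈ Gp \ Opt, s x) ≤
        f Gp + θ * ∑ x ∈ Opt \ Gp, s x := by linarith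
    have h6 : ∑ x ∈ Opt ∩ Gp, s x + ∑ x ∈ Opt \ Gp, s x ≤ γ := by linarith
    rw [← hsplitG]
    nlinarith [mul_nonneg hθnn (by linarith :
        (0:ℝ) ≤ γ - ∑ x ∈ Opt ∩ Gp, s x - ∑ x ∈ Opt \ Gp, s x),
      mul_nonneg (mul_nonneg hθnn hc0) hPnn]
  have hDnn : 0 ≤ γ - (1 - c) * ∑ x ∈ Gp, s x := by
    nlinarith [mul_nonneg hc0 hGpnn]
  rcases eq_or_lt_of_le hDnn with hD | hD
  · rw [← hD, div_zero, zero_mul]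
    exact hδnn j hj1 hj2
  · rw [ge_iff_le, div_mul_eq_mul_div, div_le_iff₀ hD]
    have hst : s (i j) * θ = f (G j) - f Gp := by
      rw [hθ]; field_simp
    calc s (i j) * (f Opt - f Gp)
        ≤ s (i j) * (θ * (γ - (1 - c) * ∑ x ∈ Gp, s x)) :=
          mul_le_mul_of_nonneg_left hmain hsj.le
      _ = (f (G j) - f Gp) * (γ - (1 - c) * ∑ x ∈ Gp, s x) := by
          rw [← hst]; ring
end

section
/- Greedy increment bound (Lemma 2(i)): With the setup of the greedy sequence for submodular maximization under a knapsack with capacity γ, curvature c, indicator χ_m = 1 iff i_m ∈ Opt, and s*_{j-1} = s(Opt ∩ G_{j-1}), for all j ∈ {1,…,k+1}: δ_j ≥ (c·s_j/γ)·(f(Opt) - ∑_{m=1}^{j-1} δ_m) + ((1-c)·s_j/(γ - s*_{j-1}))·(f(Opt) - ∑_{m=1}^{j-1} χ_m δ_m). -/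
open Finset


private lemma marg_mono {ι : Type*} [DecidableEq ι] {N : Finset ι} {f : Finset ι → ℝ}
    (hsub : ∀ A B : Finset ι, A ⊆ N → B ⊆ N → f A + f B ≥ f (A ∪ B) + f (A ∩ B))
    {A B : Finset ι} {x : ι} (hAB : A ⊆ B) (hBN : B ⊆ N) (hx : x ∈ N) (hxB : x ∉ B) :
    f (insert x B) - f B ≤ f (insert x A) - f A := by
  have h := hsub (insert x A) B (insert_subset hx (hAB.trans hBN)) hBN
  have h1 : insert x A ∪ B = insert x B := by
    ext a
    simp only [mem_union, mem_insert]
    constructor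
    · rintro ((rfl | ha) | ha)
      · exact Or.inl rfl
      · exact Or.inr (hAB ha)
      · exact Or.inr ha
    · rintro (rfl | ha)
      · exact Or.inl (Or.inl rfl)
      · exact Or.inr ha
  have h2 : insert x A ∩ B = A := by
    ext a
    simp only [mem_inter, mem_insert]
    constructor
    · rintro ⟨rfl | ha, hb⟩
      · exact absurd hb hxB
      · exact ha
    · intro ha
      exact ⟨Or.inr ha, hAB ha⟩
  rw [h1, h2] at h
  linarith

private lemma sum_marg {ι : Type*} [DecidableEq ι] {N : Finset ι} {f : Finset ι → ℝ}
    (hsub : ∀ A B : Finset ι, A ⊆ N → B ⊆ N → f A + f B ≥ f (A ∪ B) + f (A ∩ B))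
    (S : Finset ι) (hS : S ⊆ N) :
    ∀ A : Finset ι, A ⊆ N → f (A ∪ S) - f A ≤ ∑ x ∈ S \ A, (f (insert x A) - f A) := by
  induction S using Finset.induction_on with
  | empty => intro A hA; simp
  | @insert x S hxS ih =>
    intro A hA
    have hxN : x ∈ N := hS (mem_insert_self x S)
    have hSN : S ⊆ N := (subset_insert x S).trans hS
    by_cases hxA : x ∈ A
    · have h1 : A ∪ insert x S = A ∪ S := by
        rw [union_insert, insert_eq_self.mpr (mem_union_left S hxA)]
      have h2 : insert x S \ A = S \ A := insert_sdiff_of_mem S hxA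
      rw [h1, h2]
      exact ih hSN A hA
    · have h1 : A ∪ insert x S = insert x (A ∪ S) := union_insert x A S
      have hxAS : x ∉ A ∪ S := by simp [hxA, hxS]
      have h2 : insert x S \ A = insert x (S \ A) := insert_sdiff_of_notMem S hxA
      have h3 : x ∉ S \ A := fun h => hxS (mem_sdiff.mp h).1
      have hmm := marg_mono hsub (subset_union_left (s₁ := A) (s₂ := S)) (union_subset hA hSN) hxN hxAS
      rw [h1, h2, sum_insert h3]
      have := ih hSN A hA
      linarith



/-- Lemma 2(i): greedy increment bound with curvature split. -/
theorem greedy_increment_bound_i {ι : Type*} [DecidableEq ι]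
    (N : Finset ι) (hN : N.Nonempty) (s : ι → ℝ) (f : Finset ι → ℝ)
    (γ c : ℝ) (k : ℕ) (i : ℕ → ι) (G : ℕ → Finset ι) (Opt : Finset ι)
    (hγ : 0 < γ) (hc0 : 0 ≤ c) (hc1 : c ≤ 1)
    (hspos : ∀ x ∈ N, 0 < s x)
    (hnorm : f ∅ = 0)
    (hmono : ∀ A B : Finset ι, A ⊆ B → B ⊆ N → f A ≤ f B)
    (hsub : ∀ A B : Finset ι, A ⊆ N → B ⊆ N → f A + f B ≥ f (A ∪ B) + f (A ∩ B))
    (hfpos : ∀ x ∈ N, 0 < f {x})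
    (hc : c = 1 - N.inf' hN (fun x => (f N - f (N.erase x)) / f {x}))
    (hG0 : G 0 = ∅)
    (hGsucc : ∀ j : ℕ, G (j + 1) = insert (i (j + 1)) (G j))
    (hmem : ∀ j : ℕ, 1 ≤ j → j ≤ k + 1 → i j ∈ N \ G (j - 1))
    (hfit : ∀ j : ℕ, 1 ≤ j → j ≤ k + 1 → s (i j) ≤ γ)
    (hGkfit : ∑ x ∈ G k, s x ≤ γ)
    (hgreedy : ∀ j : ℕ, 1 ≤ j → j ≤ k + 1 → ∀ x ∈ N \ G (j - 1), s x ≤ γ →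
      (f (insert x (G (j - 1))) - f (G (j - 1))) / s x ≤
      (f (insert (i j) (G (j - 1))) - f (G (j - 1))) / s (i j))
    (hOptsub : Opt ⊆ N) (hOptfeas : ∑ x ∈ Opt, s x ≤ γ)
    (hOptopt : ∀ B : Finset ι, B ⊆ N → ∑ x ∈ B, s x ≤ γ → f B ≤ f Opt)
    (hne : G k ≠ Opt) :
    ∀ j : ℕ, 1 ≤ j → j ≤ k + 1 →
      f (G j) - f (G (j - 1)) ≥
        c * s (i j) / γ *
          (f Opt - ∑ m ∈ Finset.Icc 1 (j - 1), (f (G m) - f (G (m - 1)))) +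
        (1 - c) * s (i j) / (γ - ∑ x ∈ Opt ∩ G (j - 1), s x) *
          (f Opt - ∑ m ∈ Finset.Icc 1 (j - 1),
            (if i m ∈ Opt then (1 : ℝ) else 0) * (f (G m) - f (G (m - 1)))):= by
  -- basic facts
  have hGN : ∀ u, u ≤ k + 1 → G u ⊆ N := by
    intro u
    induction u with
    | zero => intro _; rw [hG0]; exact empty_subset N
    | succ n ih =>
      intro h
      have hm := hmem (n + 1) (by omega) h
      rw [Nat.add_sub_cancel] at hm
      rw [hGsucc]
      exact insert_subset (mem_sdiff.mp hm).1 (ih (by omega))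
  have hGmono : ∀ a b : ℕ, a ≤ b → G a ⊆ G b := by
    intro a b hab
    induction hab with
    | refl => exact Finset.Subset.refl _
    | step _ ih =>
      refine ih.trans ?_
      rw [hGsucc]
      exact subset_insert _ _
  have hdle : ∀ n : ℕ, n + 1 ≤ k + 1 → f (G (n + 1)) - f (G n) ≤ f {i (n + 1)} := by
    intro n h
    have hm := hmem (n + 1) (by omega) h
    rw [Nat.add_sub_cancel] at hm
    obtain ⟨haN, haG⟩ := mem_sdiff.mp hm
    have h1 := hsub {i (n + 1)} (G n) (singleton_subset_iff.mpr haN) (hGN n (by omega))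
    have h2 : {i (n + 1)} ∪ G n = G (n + 1) := by rw [hGsucc]; rfl
    have h3 : {i (n + 1)} ∩ G n = ∅ := singleton_inter_of_notMem haG
    rw [h2, h3, hnorm] at h1
    linarith
  have htel : ∀ u, u ≤ k + 1 → f (G u) = ∑ m ∈ Finset.Icc 1 u, (f (G m) - f (G (m - 1))) := by
    intro u
    induction u with
    | zero =>
      intro _
      rw [Finset.Icc_eq_empty (by omega : ¬ (1:ℕ) ≤ 0), sum_empty, hG0, hnorm]
    | succ n ih =>
      intro h
      rw [Finset.sum_Icc_succ_top (by omega : 1 ≤ n + 1), ← ih (by omega), Nat.add_sub_cancel]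
      ring
  -- curvature lemma
  have h1c : (1 : ℝ) - c = N.inf' hN (fun x => (f N - f (N.erase x)) / f {x}) := by
    rw [hc]; ring
  have hcurvx : ∀ x ∈ N, (1 - c) * f {x} ≤ f N - f (N.erase x) := by
    intro x hx
    have h2 := Finset.inf'_le (f := fun y => (f N - f (N.erase y)) / f {y}) hx
    rw [← h1c] at h2
    have hfx := hfpos x hx
    calc (1 - c) * f {x} ≤ ((f N - f (N.erase x)) / f {x}) * f {x} :=
          mul_le_mul_of_nonneg_right h2 hfx.le
      _ = f N - f (N.erase x) := div_mul_cancel₀ _ (ne_of_gt hfx)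
  have hcurvA : ∀ x ∈ N, ∀ A : Finset ι, A ⊆ N → x ∉ A →
      (1 - c) * f {x} ≤ f (insert x A) - f A := by
    intro x hx A hA hxA
    have h3 := marg_mono hsub (Finset.subset_erase.mpr ⟨hA, hxA⟩) (erase_subset x N) hx
      (notMem_erase x N)
    rw [insert_erase hx] at h3
    exact (hcurvx x hx).trans h3
  -- curvature sum lemma
  have hcurvsum : ∀ u, u ≤ k + 1 →
      f Opt + (1 - c) * ∑ m ∈ Finset.Icc 1 u,
        (if i m ∈ Opt then (0:ℝ) else 1) * (f (G m) - f (G (m - 1))) ≤ f (Opt ∪ G u) := by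
    intro u
    induction u with
    | zero =>
      intro _
      rw [hG0, union_empty, Finset.Icc_eq_empty (by omega : ¬ (1:ℕ) ≤ 0), sum_empty]
      simp
    | succ n ih =>
      intro h
      have hn : n ≤ k + 1 := by omega
      have hm := hmem (n + 1) (by omega) h
      rw [Nat.add_sub_cancel] at hm
      obtain ⟨haN, haG⟩ := mem_sdiff.mp hm
      have hset : Opt ∪ G (n + 1) = insert (i (n + 1)) (Opt ∪ G n) := by
        rw [hGsucc, union_insert]
      rw [Finset.sum_Icc_succ_top (by omega : 1 ≤ n + 1), hset, Nat.add_sub_cancel]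
      have hIH := ih hn
      by_cases hio : i (n + 1) ∈ Opt
      · rw [if_pos hio, insert_eq_self.mpr (mem_union_left _ hio)]
        have hexp : (1 - c) * (∑ m ∈ Finset.Icc 1 n,
            (if i m ∈ Opt then (0:ℝ) else 1) * (f (G m) - f (G (m - 1)))
            + 0 * (f (G (n + 1)) - f (G n)))
            = (1 - c) * ∑ m ∈ Finset.Icc 1 n,
            (if i m ∈ Opt then (0:ℝ) else 1) * (f (G m) - f (G (m - 1))) := by ring
        rw [hexp]
        exact hIH
      · rw [if_neg hio]
        have hins := hcurvA (i (n + 1)) haN (Opt ∪ G n) (union_subset hOptsub (hGN n hn))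
          (by simp [hio, haG])
        have hd := hdle n h
        have h1c' : (0:ℝ) ≤ 1 - c := by linarith
        have hmul := mul_le_mul_of_nonneg_left hd h1c'
        nlinarith [hIH, hins, hmul]
  -- main argument
  intro j hj1 hj2
  obtain ⟨t, rfl⟩ : ∃ t, j = t + 1 := ⟨j - 1, by omega⟩
  simp only [Nat.add_sub_cancel]
  have ht : t ≤ k := by omega
  have hm := hmem (t + 1) (by omega) hj2
  rw [Nat.add_sub_cancel] at hm
  obtain ⟨hiN, hiA⟩ := mem_sdiff.mp hm
  have hGjN : G (t + 1) ⊆ N := hGN _ hj2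
  have hGtN : G t ⊆ N := hGN t (by omega)
  have hsj : 0 < s (i (t + 1)) := hspos _ hiN
  have hδ0 : 0 ≤ f (G (t + 1)) - f (G t) := by
    have := hmono (G t) (G (t + 1)) (hGmono t (t + 1) (Nat.le_succ t)) hGjN
    linarith
  have hsOptnn : ∀ x ∈ Opt, 0 ≤ s x := fun x hx => (hspos x (hOptsub hx)).le
  have hsplit : ∑ x ∈ Opt ∩ G t, s x + ∑ x ∈ Opt \ G t, s x = ∑ x ∈ Opt, s x :=
    Finset.sum_inter_add_sum_sdiff Opt (G t) s
  have hsstar_nn : 0 ≤ ∑ x ∈ Opt ∩ G t, s x :=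
    sum_nonneg fun x hx => hsOptnn x (mem_inter.mp hx).1
  have hsD_nn : 0 ≤ ∑ x ∈ Opt \ G t, s x :=
    sum_nonneg fun x hx => hsOptnn x (mem_sdiff.mp hx).1
  have hsstar_le : ∑ x ∈ Opt ∩ G t, s x ≤ γ := by linarith
  set P := ∑ m ∈ Finset.Icc 1 t, (f (G m) - f (G (m - 1))) with hPdef
  set Q := ∑ m ∈ Finset.Icc 1 t,
    (if i m ∈ Opt then (1:ℝ) else 0) * (f (G m) - f (G (m - 1))) with hQdef
  have hPeq : f (G t) = P := htel t (by omega)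
  have hfOptP : f (G t) ≤ f Opt := by
    refine hOptopt (G t) hGtN (le_trans ?_ hGkfit)
    exact sum_le_sum_of_subset_of_nonneg (hGmono t k ht)
      (fun x hx _ => (hspos x (hGN k (by omega) hx)).le)
  have hR : ∑ m ∈ Finset.Icc 1 t,
      (if i m ∈ Opt then (0:ℝ) else 1) * (f (G m) - f (G (m - 1))) = P - Q := by
    rw [hPdef, hQdef, ← Finset.sum_sub_distrib]
    refine Finset.sum_congr rfl fun m _ => ?_
    by_cases h : i m ∈ Opt <;> simp [h]
  rcases hsstar_le.lt_or_eq with hlt | heq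
  · -- γ - s* > 0
    have hgpos : 0 < γ - ∑ x ∈ Opt ∩ G t, s x := by linarith
    -- step 1: marginals of x ∈ Opt \ G t bounded by greedy ratio
    have hstep1 : ∀ x ∈ Opt \ G t, f (insert x (G t)) - f (G t) ≤
        (f (G (t + 1)) - f (G t)) / s (i (t + 1)) * s x := by
      intro x hx
      obtain ⟨hxO, hxG⟩ := mem_sdiff.mp hx
      have hxN : x ∈ N := hOptsub hxO
      have hsx : 0 < s x := hspos x hxN
      have hsxγ : s x ≤ γ := le_trans (Finset.single_le_sum hsOptnn hxO) hOptfeas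
      have hgr := hgreedy (t + 1) (by omega) hj2 x
        (by rw [Nat.add_sub_cancel]; exact mem_sdiff.mpr ⟨hxN, hxG⟩) hsxγ
      rw [Nat.add_sub_cancel, ← hGsucc t] at hgr
      exact (div_le_iff₀ hsx).mp hgr
    have hsum1 : ∑ x ∈ Opt \ G t, (f (insert x (G t)) - f (G t)) ≤
        (f (G (t + 1)) - f (G t)) / s (i (t + 1)) * ∑ x ∈ Opt \ G t, s x := by
      rw [Finset.mul_sum]
      exact Finset.sum_le_sum hstep1
    have hstep2 := sum_marg hsub Opt hOptsub (G t) hGtN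
    have hδsj : 0 ≤ (f (G (t + 1)) - f (G t)) / s (i (t + 1)) := div_nonneg hδ0 hsj.le
    have hsD_le : ∑ x ∈ Opt \ G t, s x ≤ γ - ∑ x ∈ Opt ∩ G t, s x := by linarith
    have hcs := hcurvsum t (by omega)
    rw [hR] at hcs
    rw [union_comm] at hcs
    have hmain : f Opt + (1 - c) * (P - Q) ≤ P +
        (f (G (t + 1)) - f (G t)) / s (i (t + 1)) * (γ - ∑ x ∈ Opt ∩ G t, s x) := by
      have h4 : (f (G (t + 1)) - f (G t)) / s (i (t + 1)) * ∑ x ∈ Opt \ G t, s x ≤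
          (f (G (t + 1)) - f (G t)) / s (i (t + 1)) * (γ - ∑ x ∈ Opt ∩ G t, s x) :=
        mul_le_mul_of_nonneg_left hsD_le hδsj
      have h5 : Opt \ G t = Opt \ G t := rfl
      -- hstep2 : f (G t ∪ Opt) - f (G t) ≤ ∑ x ∈ Opt \ G t, (f (insert x (G t)) - f (G t))
      linarith [hcs, hstep2, hsum1, h4, hPeq.symm.le, hPeq.le]
    have key : (1 - c) * (f Opt - Q) + c * (f Opt - P) ≤
        (f (G (t + 1)) - f (G t)) / s (i (t + 1)) * (γ - ∑ x ∈ Opt ∩ G t, s x) := by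
      have hid : (1 - c) * (f Opt - Q) + c * (f Opt - P) = f Opt + (1 - c) * (P - Q) - P := by
        ring
      rw [hid]
      linarith
    have h8 : ((1 - c) * (f Opt - Q) + c * (f Opt - P)) / (γ - ∑ x ∈ Opt ∩ G t, s x) ≤
        (f (G (t + 1)) - f (G t)) / s (i (t + 1)) := (div_le_iff₀ hgpos).mpr key
    have h7 : ((1 - c) * (f Opt - Q) + c * (f Opt - P)) / (γ - ∑ x ∈ Opt ∩ G t, s x)
        * s (i (t + 1)) ≤ f (G (t + 1)) - f (G t) := by
      calc ((1 - c) * (f Opt - Q) + c * (f Opt - P)) / (γ - ∑ x ∈ Opt ∩ G t, s x)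
            * s (i (t + 1))
          ≤ (f (G (t + 1)) - f (G t)) / s (i (t + 1)) * s (i (t + 1)) :=
            mul_le_mul_of_nonneg_right h8 hsj.le
        _ = f (G (t + 1)) - f (G t) := div_mul_cancel₀ _ (ne_of_gt hsj)
    have hsplit2 : ((1 - c) * (f Opt - Q) + c * (f Opt - P)) / (γ - ∑ x ∈ Opt ∩ G t, s x)
        * s (i (t + 1)) =
        (1 - c) * s (i (t + 1)) / (γ - ∑ x ∈ Opt ∩ G t, s x) * (f Opt - Q)
        + c * s (i (t + 1)) / (γ - ∑ x ∈ Opt ∩ G t, s x) * (f Opt - P) := by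
      ring
    have hmono2 : c * s (i (t + 1)) / γ * (f Opt - P) ≤
        c * s (i (t + 1)) / (γ - ∑ x ∈ Opt ∩ G t, s x) * (f Opt - P) := by
      apply mul_le_mul_of_nonneg_right _ (by linarith : (0:ℝ) ≤ f Opt - P)
      apply div_le_div_of_nonneg_left (mul_nonneg hc0 hsj.le) hgpos (by linarith)
    rw [hsplit2] at h7
    linarith
  · -- γ - s* = 0 : Opt ⊆ G t
    have h0 : γ - ∑ x ∈ Opt ∩ G t, s x = 0 := by linarith
    rw [h0, div_zero, zero_mul, add_zero]
    have hD0 : ∑ x ∈ Opt \ G t, s x = 0 := by linarith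
    have hDempty : Opt \ G t = ∅ := by
      by_contra hne'
      obtain ⟨x, hx⟩ := Finset.nonempty_iff_ne_empty.mpr hne'
      have hsx : 0 < s x := hspos x (hOptsub (mem_sdiff.mp hx).1)
      have := Finset.single_le_sum (fun y hy => hsOptnn y (mem_sdiff.mp hy).1) hx
      linarith
    have hOG : Opt ⊆ G t := sdiff_eq_empty_iff_subset.mp hDempty
    have hfO : f Opt ≤ f (G t) := hmono Opt (G t) hOG hGtN
    have hT1 : c * s (i (t + 1)) / γ * (f Opt - P) ≤ 0 :=
      mul_nonpos_of_nonneg_of_nonpos (div_nonneg (mul_nonneg hc0 hsj.le) hγ.le)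
        (by linarith)
    linarith
end

section
/- For the greedy sequence of a submodular knapsack instance with curvature c ∈ (0,1], for all j ∈ {1,…,k}: f(G_j) ≥ (1/c)·(1 - ∏_{m=1}^{j}(1 - c·s_m/γ))·f(Opt). -/
open Finset

/-- Weierstrass product inequality. -/
lemma greedy_weier (T : Finset ℕ) (x : ℕ → ℝ) (h0 : ∀ t ∈ T, 0 ≤ x t)
    (h1 : ∀ t ∈ T, x t ≤ 1) : 1 - ∑ t ∈ T, x t ≤ ∏ t ∈ T, (1 - x t) := by
  classical
  induction T using Finset.induction_on with
  | empty => simp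
  | insert a T ha ih =>
    rw [Finset.sum_insert ha, Finset.prod_insert ha]
    have hxa0 := h0 a (Finset.mem_insert_self a T)
    have hxa1 := h1 a (Finset.mem_insert_self a T)
    have ih' := ih (fun t ht => h0 t (Finset.mem_insert_of_mem ht))
      (fun t ht => h1 t (Finset.mem_insert_of_mem ht))
    have hP : (0:ℝ) ≤ ∏ t ∈ T, (1 - x t) :=
      Finset.prod_nonneg fun t ht => by
        have := h1 t (Finset.mem_insert_of_mem ht); linarith
    have hS : (0:ℝ) ≤ ∑ t ∈ T, x t :=
      Finset.sum_nonneg fun t ht => h0 t (Finset.mem_insert_of_mem ht)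
    nlinarith [mul_le_mul_of_nonneg_left ih' (by linarith : (0:ℝ) ≤ 1 - x a)]

/-- Key algebraic inequality for the prefix induction. -/
lemma greedy_key (c u s0 : ℝ) (T : Finset ℕ) (g : ℕ → ℝ)
    (hc0 : 0 < c) (hc1 : c ≤ 1) (hs : 0 < s0) (hu : 0 < u)
    (hg : ∀ t ∈ T, 0 < g t) (hsum : s0 + ∑ t ∈ T, g t ≤ u) :
    (1 - c) * s0 / u ≤ (1 - c * s0 / u) * ∏ t ∈ T, (1 - c * g t / u)
      - (1 - s0 / u) * ∏ t ∈ T, (1 - c * g t / (u - s0)) := by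
  classical
  induction T using Finset.induction_on with
  | empty =>
    simp only [Finset.prod_empty, mul_one]
    rw [div_eq_mul_inv, div_eq_mul_inv, div_eq_mul_inv]
    ring_nf
    nlinarith [mul_pos hs (inv_pos.mpr hu)]
  | insert a T ha ih =>
    have hga := hg a (Finset.mem_insert_self a T)
    have hgT : ∀ t ∈ T, 0 < g t := fun t ht => hg t (Finset.mem_insert_of_mem ht)
    have hsT : (0:ℝ) ≤ ∑ t ∈ T, g t := Finset.sum_nonneg fun t ht => (hgT t ht).le
    have hsum' : s0 + ∑ t ∈ T, g t ≤ u := by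
      rw [Finset.sum_insert ha] at hsum; linarith
    have ih' := ih hgT hsum'
    have hus : 0 < u - s0 := by
      rw [Finset.sum_insert ha] at hsum; linarith
    have hgau : g a ≤ u - s0 := by
      rw [Finset.sum_insert ha] at hsum; linarith
    have hfac : 0 ≤ 1 - c * g a / u := by
      rw [sub_nonneg, div_le_one hu]; nlinarith
    have hR : 1 - c ≤ ∏ t ∈ T, (1 - c * g t / (u - s0)) := by
      have hW := greedy_weier T (fun t => c * g t / (u - s0))
        (fun t ht => by have := (hgT t ht).le; positivity)
        (fun t ht => by
          rw [div_le_one hus]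
          have h1 : g t ≤ ∑ t ∈ T, g t := Finset.single_le_sum (fun t ht => (hgT t ht).le) ht
          have h2 : ∑ t ∈ T, g t ≤ u - s0 - g a := by
            rw [Finset.sum_insert ha] at hsum; linarith
          nlinarith)
      have hsum2 : ∑ t ∈ T, c * g t / (u - s0) ≤ c := by
        have he : ∑ t ∈ T, c * g t / (u - s0) = c * (∑ t ∈ T, g t) / (u - s0) := by
          rw [Finset.mul_sum, Finset.sum_div]
        rw [he, div_le_iff₀ hus]
        have h2 : ∑ t ∈ T, g t ≤ u - s0 := by
          rw [Finset.sum_insert ha] at hsum; linarith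
        nlinarith
      calc 1 - c ≤ 1 - ∑ t ∈ T, c * g t / (u - s0) := by linarith
        _ ≤ _ := hW
    rw [Finset.prod_insert ha, Finset.prod_insert ha]
    set P := ∏ t ∈ T, (1 - c * g t / u) with hPdef
    set R := ∏ t ∈ T, (1 - c * g t / (u - s0)) with hRdef
    have hid : (1 - c * s0 / u) * ((1 - c * g a / u) * P)
        - (1 - s0 / u) * ((1 - c * g a / (u - s0)) * R)
        = (1 - c * g a / u) * ((1 - c * s0 / u) * P - (1 - s0 / u) * R)
          + (c * g a * s0 / (u * u)) * R := by
      field_simp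
      ring
    have h1 : (1 - c * g a / u) * ((1 - c) * s0 / u)
        ≤ (1 - c * g a / u) * ((1 - c * s0 / u) * P - (1 - s0 / u) * R) :=
      mul_le_mul_of_nonneg_left ih' hfac
    have h2 : (c * g a * s0 / (u * u)) * (1 - c) ≤ (c * g a * s0 / (u * u)) * R :=
      mul_le_mul_of_nonneg_left hR (by positivity)
    have hid2 : (1 - c * g a / u) * ((1 - c) * s0 / u)
        + (c * g a * s0 / (u * u)) * (1 - c) = (1 - c) * s0 / u := by
      field_simp
      ring
    linarith

set_option maxHeartbeats 1000000 in
/-- Product form of the greedy prefix bound (Lemma 3 with l = 0). -/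
theorem greedy_prefix_product_bound {ι : Type*} [DecidableEq ι]
    (N : Finset ι) (hN : N.Nonempty) (s : ι → ℝ) (f : Finset ι → ℝ)
    (γ c : ℝ) (k : ℕ) (i : ℕ → ι) (G : ℕ → Finset ι) (Opt : Finset ι)
    (hγ : 0 < γ) (hc0 : 0 < c) (hc1 : c ≤ 1)
    (hspos : ∀ x ∈ N, 0 < s x)
    (hnorm : f ∅ = 0)
    (hmono : ∀ A B : Finset ι, A ⊆ B → B ⊆ N → f A ≤ f B)
    (hsub : ∀ A B : Finset ι, A ⊆ N → B ⊆ N → f A + f B ≥ f (A ∪ B) + f (A ∩ B))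
    (hfpos : ∀ x ∈ N, 0 < f {x})
    (hc : c = 1 - N.inf' hN (fun x => (f N - f (N.erase x)) / f {x}))
    (hG0 : G 0 = ∅)
    (hGsucc : ∀ j : ℕ, G (j + 1) = insert (i (j + 1)) (G j))
    (hmem : ∀ j : ℕ, 1 ≤ j → j ≤ k + 1 → i j ∈ N \ G (j - 1))
    (hfit : ∀ j : ℕ, 1 ≤ j → j ≤ k + 1 → s (i j) ≤ γ)
    (hGkfit : ∑ x ∈ G k, s x ≤ γ)
    (hgreedy : ∀ j : ℕ, 1 ≤ j → j ≤ k + 1 → ∀ x ∈ N \ G (j - 1), s x ≤ γ →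
      (f (insert x (G (j - 1))) - f (G (j - 1))) / s x ≤
      (f (insert (i j) (G (j - 1))) - f (G (j - 1))) / s (i j))
    (hOptsub : Opt ⊆ N) (hOptfeas : ∑ x ∈ Opt, s x ≤ γ)
    (hOptopt : ∀ B : Finset ι, B ⊆ N → ∑ x ∈ B, s x ≤ γ → f B ≤ f Opt)
    (hne : G k ≠ Opt) :
    ∀ j : ℕ, 1 ≤ j → j ≤ k →
      f (G j) ≥ (1 / c) * (1 - ∏ m ∈ Finset.Icc 1 j, (1 - c * s (i m) / γ)) * f Opt := by
  have hc1' : (0:ℝ) ≤ 1 - c := by linarith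
  -- G t ⊆ N
  have hGN : ∀ t, t ≤ k + 1 → G t ⊆ N := by
    intro t
    induction t with
    | zero => intro _; rw [hG0]; exact Finset.empty_subset N
    | succ t iht =>
      intro ht
      rw [hGsucc t]
      have hmt := hmem (t+1) (by omega) ht
      simp only [Nat.add_sub_cancel] at hmt
      rw [Finset.mem_sdiff] at hmt
      exact Finset.insert_subset_iff.mpr ⟨hmt.1, iht (by omega)⟩
  have hiNG : ∀ t, t ≤ k → i (t+1) ∈ N ∧ i (t+1) ∉ G t := by
    intro t ht
    have hmt := hmem (t+1) (by omega) (by omega)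
    simp only [Nat.add_sub_cancel] at hmt
    exact Finset.mem_sdiff.mp hmt
  have hGmono : ∀ a b : ℕ, a ≤ b → G a ⊆ G b := by
    intro a b hab
    induction b with
    | zero =>
      have : a = 0 := by omega
      subst this; exact subset_rfl
    | succ b ihb =>
      rcases Nat.lt_or_ge a (b+1) with h | h
      · have h2 := ihb (by omega)
        rw [hGsucc b]; exact h2.trans (Finset.subset_insert _ _)
      · have : a = b + 1 := by omega
        subst this; exact subset_rfl
  -- submodularity: decreasing marginals
  have hmarg : ∀ (A B : Finset ι) (x : ι), A ⊆ B → B ⊆ N → x ∈ N → x ∉ B →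
      f (insert x B) - f B ≤ f (insert x A) - f A := by
    intro A B x hAB hBN hxN hxB
    have h := hsub (insert x A) B (Finset.insert_subset_iff.mpr ⟨hxN, hAB.trans hBN⟩) hBN
    have h1 : insert x A ∪ B = insert x B := by
      rw [Finset.insert_union, Finset.union_eq_right.mpr hAB]
    have h2 : insert x A ∩ B = A := by
      rw [Finset.insert_inter_of_notMem hxB, Finset.inter_eq_left.mpr hAB]
    rw [h1, h2] at h
    linarith
  have hsingle : ∀ (B : Finset ι) (x : ι), B ⊆ N → x ∈ N → x ∉ B →
      f (insert x B) - f B ≤ f {x} := by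
    intro B x hBN hxN hxB
    have h := hmarg ∅ B x (Finset.empty_subset B) hBN hxN hxB
    rw [Finset.insert_empty, hnorm] at h
    linarith
  have hcurvx : ∀ x ∈ N, (1 - c) * f {x} ≤ f N - f (N.erase x) := by
    intro x hx
    have h1 : N.inf' hN (fun y => (f N - f (N.erase y)) / f {y})
        ≤ (f N - f (N.erase x)) / f {x} := Finset.inf'_le _ hx
    have h2 : 1 - c ≤ (f N - f (N.erase x)) / f {x} := by rw [hc]; linarith
    exact (le_div_iff₀ (hfpos x hx)).mp h2
  have hcurvB : ∀ (B : Finset ι) (x : ι), B ⊆ N → x ∈ N → x ∉ B →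
      (1 - c) * f {x} ≤ f (insert x B) - f B := by
    intro B x hBN hxN hxB
    have hsubE : B ⊆ N.erase x := Finset.subset_erase.mpr ⟨hBN, hxB⟩
    have h := hmarg B (N.erase x) x hsubE (Finset.erase_subset x N) hxN
      (Finset.notMem_erase x N)
    rw [Finset.insert_erase hxN] at h
    have h2 := hcurvx x hxN
    linarith
  -- submodular telescoping
  have htel : ∀ (B : Finset ι), B ⊆ N → ∀ (T : Finset ι), T ⊆ N →
      f (T ∪ B) - f B ≤ ∑ x ∈ T \ B, (f (insert x B) - f B) := by
    intro B hBN T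
    induction T using Finset.induction_on with
    | empty => intro _; simp
    | insert a T ha ih =>
      intro hTN
      have haN : a ∈ N := hTN (Finset.mem_insert_self a T)
      have hTN' : T ⊆ N := (Finset.subset_insert a T).trans hTN
      have ih' := ih hTN'
      by_cases haB : a ∈ B
      · have h1 : insert a T ∪ B = T ∪ B := by
          rw [Finset.insert_union, Finset.insert_eq_self.mpr (Finset.mem_union_right T haB)]
        have h2 : insert a T \ B = T \ B := by
          ext y
          simp only [Finset.mem_sdiff, Finset.mem_insert]
          constructor
          · rintro ⟨h | h, hyB⟩
            · exact absurd (h ▸ haB) hyB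
            · exact ⟨h, hyB⟩
          · rintro ⟨h, hyB⟩
            exact ⟨Or.inr h, hyB⟩
        rw [h1, h2]; exact ih'
      · have haTB : a ∉ T ∪ B := by
          simp only [Finset.mem_union]
          push_neg
          exact ⟨ha, haB⟩
        have h1 : insert a T ∪ B = insert a (T ∪ B) := Finset.insert_union a T B
        have h2 : insert a T \ B = insert a (T \ B) := by
          ext y
          simp only [Finset.mem_sdiff, Finset.mem_insert]
          constructor
          · rintro ⟨h | h, hyB⟩
            · exact Or.inl h
            · exact Or.inr ⟨h, hyB⟩
          · rintro (h | ⟨h, hyB⟩)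
            · exact ⟨Or.inl h, h ▸ haB⟩
            · exact ⟨Or.inr h, hyB⟩
        have hstep : f (insert a (T ∪ B)) - f (T ∪ B) ≤ f (insert a B) - f B :=
          hmarg B (T ∪ B) a Finset.subset_union_right (Finset.union_subset hTN' hBN) haN haTB
        have hnm : a ∉ T \ B := fun hmem' => ha (Finset.mem_sdiff.mp hmem').1
        rw [h1, h2, Finset.sum_insert hnm]
        linarith
  intro j hj1 hjk
  -- size facts
  have hsOpt : ∀ x ∈ Opt, 0 < s x := fun x hx => hspos x (hOptsub hx)
  have hsxγ : ∀ x ∈ Opt, s x ≤ γ := by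
    intro x hx
    have h1 : s x ≤ ∑ y ∈ Opt, s y :=
      Finset.single_le_sum (fun y hy => (hsOpt y hy).le) hx
    linarith
  have hiposI : ∀ t, 1 ≤ t → t ≤ k+1 → 0 < s (i t) := by
    intro t h1 h2
    have hmt := hmem t h1 h2
    exact hspos _ ((Finset.mem_sdiff.mp hmt).1)
  have hσstep : ∀ t, t ≤ k → ∑ x ∈ G (t+1), s x = ∑ x ∈ G t, s x + s (i (t+1)) := by
    intro t ht
    rw [hGsucc t, Finset.sum_insert (hiNG t ht).2]
    ring
  have haux : ∀ d l, l + d ≤ k → ∑ t ∈ Finset.Ico (l+1) (l+d+1), s (i t)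
      = ∑ x ∈ G (l+d), s x - ∑ x ∈ G l, s x := by
    intro d
    induction d with
    | zero => intro l _; simp
    | succ d ihd =>
      intro l hld
      rw [show l + (d+1) = l + d + 1 from by omega]
      rw [Finset.sum_Ico_succ_top (by omega : l + 1 ≤ l + d + 1)]
      rw [ihd l (by omega), hσstep (l+d) (by omega)]
      ring
  have hσγ : ∑ x ∈ G j, s x ≤ γ := by
    have h1 : ∑ x ∈ G j, s x ≤ ∑ x ∈ G k, s x :=
      Finset.sum_le_sum_of_subset_of_nonneg (hGmono j k hjk)
        (fun x hx _ => (hspos x (hGN k (by omega) hx)).le)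
    linarith
  have hSle : ∀ l, l ≤ k → ∑ x ∈ Opt ∩ G l, s x ≤ ∑ x ∈ G l, s x := by
    intro l hl
    exact Finset.sum_le_sum_of_subset_of_nonneg Finset.inter_subset_right
      (fun x hx _ => (hspos x (hGN l (by omega) hx)).le)
  have hstot : ∀ l, l ≤ j → ∑ t ∈ Finset.Ico (l+1) (j+1), s (i t)
      ≤ γ - ∑ x ∈ Opt ∩ G l, s x := by
    intro l hl
    obtain ⟨d, rfl⟩ : ∃ d, j = l + d := ⟨j - l, by omega⟩
    rw [haux d l (by omega)]
    have h2 := hSle l (by omega)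
    linarith
  -- main downward induction
  have main : ∀ n, ∀ l, l + n = j →
      (1 - ∏ t ∈ Finset.Ico (l+1) (j+1),
          (1 - c * s (i t) / (γ - ∑ x ∈ Opt ∩ G l, s x)))
        * (f (Opt ∪ G l) - f (G l)) ≤ c * (f (G j) - f (G l)) := by
    intro n
    induction n with
    | zero =>
      intro l hl
      have hlj : l = j := by omega
      subst hlj
      rw [Finset.Ico_self, Finset.prod_empty]
      simp
    | succ n ihn =>
      intro l hl
      have hlj : l < j := by omega
      have hlk : l ≤ k := by omega
      have hGlN : G l ⊆ N := hGN l (by omega)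
      have hGl1N : G (l+1) ⊆ N := hGN (l+1) (by omega)
      have hiN : i (l+1) ∈ N := (hiNG l hlk).1
      have hiGl : i (l+1) ∉ G l := (hiNG l hlk).2
      have hs0pos : 0 < s (i (l+1)) := hspos _ hiN
      have hmem_l1 : l + 1 ∈ Finset.Ico (l+1) (j+1) := Finset.mem_Ico.mpr ⟨le_rfl, by omega⟩
      have hsum_l := hstot l (by omega)
      have hpos_sum : ∀ t ∈ Finset.Ico (l+1) (j+1), 0 ≤ s (i t) := by
        intro t ht
        have htm := Finset.mem_Ico.mp ht
        exact (hiposI t (by omega) (by omega)).le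
      have hs0le : s (i (l+1)) ≤ ∑ t ∈ Finset.Ico (l+1) (j+1), s (i t) :=
        Finset.single_le_sum hpos_sum hmem_l1
      have hu : 0 < γ - ∑ x ∈ Opt ∩ G l, s x := by linarith
      have hfle : ∀ t ∈ Finset.Ico (l+1) (j+1),
          s (i t) ≤ γ - ∑ x ∈ Opt ∩ G l, s x := by
        intro t ht
        have h1 : s (i t) ≤ ∑ t' ∈ Finset.Ico (l+1) (j+1), s (i t') :=
          Finset.single_le_sum hpos_sum ht
        linarith
      have hρ0 : 0 ≤ f (G (l+1)) - f (G l) := by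
        have := hmono (G l) (G (l+1)) (hGmono l (l+1) (by omega)) hGl1N; linarith
      have hOGN : Opt ∪ G l ⊆ N := Finset.union_subset hOptsub hGlN
      have hOG1N : Opt ∪ G (l+1) ⊆ N := Finset.union_subset hOptsub hGl1N
      have hΨ0 : 0 ≤ f (Opt ∪ G l) - f (G l) := by
        have := hmono (G l) (Opt ∪ G l) Finset.subset_union_right hOGN; linarith
      have hΨ'0 : 0 ≤ f (Opt ∪ G (l+1)) - f (G (l+1)) := by
        have := hmono (G (l+1)) (Opt ∪ G (l+1)) Finset.subset_union_right hOG1N; linarith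
      -- per-step greedy bound
      have hD : s (i (l+1)) * (f (Opt ∪ G l) - f (G l))
          ≤ (f (G (l+1)) - f (G l)) * (γ - ∑ x ∈ Opt ∩ G l, s x) := by
        have h1 := htel (G l) hGlN Opt hOptsub
        have h2 : ∀ x ∈ Opt \ G l, (f (insert x (G l)) - f (G l)) * s (i (l+1))
            ≤ (f (G (l+1)) - f (G l)) * s x := by
          intro x hx
          have hx' := Finset.mem_sdiff.mp hx
          have hxN : x ∈ N := hOptsub hx'.1
          have hg := hgreedy (l+1) (by omega) (by omega) x (by
            simp only [Nat.add_sub_cancel]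
            exact Finset.mem_sdiff.mpr ⟨hxN, hx'.2⟩) (hsxγ x hx'.1)
          simp only [Nat.add_sub_cancel] at hg
          rw [div_le_div_iff₀ (hspos x hxN) hs0pos] at hg
          rw [hGsucc l]
          exact hg
        have h3 : (f (Opt ∪ G l) - f (G l)) * s (i (l+1))
            ≤ ∑ x ∈ Opt \ G l, ((f (insert x (G l)) - f (G l)) * s (i (l+1))) := by
          rw [← Finset.sum_mul]
          exact mul_le_mul_of_nonneg_right h1 hs0pos.le
        have h4 := Finset.sum_le_sum h2
        have h5 : ∑ x ∈ Opt \ G l, ((f (G (l+1)) - f (G l)) * s x)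
            = (f (G (l+1)) - f (G l)) * (∑ x ∈ Opt \ G l, s x) := by
          rw [Finset.mul_sum]
        have h6 : ∑ x ∈ Opt \ G l, s x = ∑ x ∈ Opt, s x - ∑ x ∈ Opt ∩ G l, s x := by
          rw [← Finset.sdiff_inter_self_left Opt (G l)]
          exact Finset.sum_sdiff_eq_sub Finset.inter_subset_left
        have h7 : ∑ x ∈ Opt \ G l, s x ≤ γ - ∑ x ∈ Opt ∩ G l, s x := by
          rw [h6]; linarith
        have h8 : (f (G (l+1)) - f (G l)) * (∑ x ∈ Opt \ G l, s x)
            ≤ (f (G (l+1)) - f (G l)) * (γ - ∑ x ∈ Opt ∩ G l, s x) :=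
          mul_le_mul_of_nonneg_left h7 hρ0
        have h9 := h3.trans h4
        rw [h5] at h9
        nlinarith [h9, h8]
      have hwΨ : (s (i (l+1)) / (γ - ∑ x ∈ Opt ∩ G l, s x)) * (f (Opt ∪ G l) - f (G l))
          ≤ f (G (l+1)) - f (G l) := by
        rw [div_mul_eq_mul_div, div_le_iff₀ hu]
        nlinarith [hD]
      -- abbreviations
      set s0 := s (i (l+1)) with hs0d
      set u := γ - ∑ x ∈ Opt ∩ G l, s x with hud
      set ρ := f (G (l+1)) - f (G l) with hρd
      set Ψ := f (Opt ∪ G l) - f (G l) with hΨd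
      set Ψ' := f (Opt ∪ G (l+1)) - f (G (l+1)) with hΨ'd
      set D := f (G j) - f (G l) with hDd
      set D' := f (G j) - f (G (l+1)) with hD'd
      set Pb := ∏ t ∈ Finset.Ico (l+1+1) (j+1), (1 - c * s (i t) / u) with hPbd
      set Pa := ∏ t ∈ Finset.Ico (l+1+1) (j+1), (1 - c * s (i t) / (u - s0)) with hPad
      set w := s0 / u with hwd
      have hcw : c * s0 / u = c * w := by rw [hwd, mul_div_assoc]
      have hwpos : 0 < w := by rw [hwd]; positivity
      have hsplit : (∏ t ∈ Finset.Ico (l+1) (j+1), (1 - c * s (i t) / u))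
          = (1 - c * s0 / u) * Pb := by
        rw [hPbd, hs0d]
        exact Finset.prod_eq_prod_Ico_succ_bot (by omega) _
      have hDD' : D = D' + ρ := by rw [hDd, hD'd, hρd]; ring
      have hW : 1 - c ≤ (1 - c * s0 / u) * Pb := by
        rw [← hsplit]
        have h0 : ∀ t ∈ Finset.Ico (l+1) (j+1), 0 ≤ c * s (i t) / u := by
          intro t ht
          have := hpos_sum t ht
          positivity
        have h1 : ∀ t ∈ Finset.Ico (l+1) (j+1), c * s (i t) / u ≤ 1 := by
          intro t ht
          rw [div_le_one hu]
          have h2 := hfle t ht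
          nlinarith [hpos_sum t ht]
        have hWe := greedy_weier (Finset.Ico (l+1) (j+1)) _ h0 h1
        have hsum2 : ∑ t ∈ Finset.Ico (l+1) (j+1), c * s (i t) / u ≤ c := by
          have he : ∑ t ∈ Finset.Ico (l+1) (j+1), c * s (i t) / u
              = c * (∑ t ∈ Finset.Ico (l+1) (j+1), s (i t)) / u := by
            rw [Finset.mul_sum, Finset.sum_div]
          rw [he, div_le_iff₀ hu]
          nlinarith [hsum_l]
        linarith
      have hsum_split : (∑ t ∈ Finset.Ico (l+1) (j+1), s (i t))
          = s0 + ∑ t ∈ Finset.Ico (l+1+1) (j+1), s (i t) := by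
        rw [hs0d]
        exact Finset.sum_eq_sum_Ico_succ_bot (by omega) _
      have hPb0 : 0 ≤ Pb := by
        rw [hPbd]
        refine Finset.prod_nonneg (fun t ht => ?_)
        have htm := Finset.mem_Ico.mp ht
        have ht' : t ∈ Finset.Ico (l+1) (j+1) := Finset.mem_Ico.mpr ⟨by omega, htm.2⟩
        have h1 := hfle t ht'
        have h2 := hpos_sum t ht'
        rw [sub_nonneg, div_le_one hu]
        nlinarith
      have hPb1 : Pb ≤ 1 := by
        rw [hPbd]
        refine Finset.prod_le_one (fun t ht => ?_) (fun t ht => ?_)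
        · have htm := Finset.mem_Ico.mp ht
          have ht' : t ∈ Finset.Ico (l+1) (j+1) := Finset.mem_Ico.mpr ⟨by omega, htm.2⟩
          have h1 := hfle t ht'
          have h2 := hpos_sum t ht'
          rw [sub_nonneg, div_le_one hu]
          nlinarith
        · have htm := Finset.mem_Ico.mp ht
          have ht' : t ∈ Finset.Ico (l+1) (j+1) := Finset.mem_Ico.mpr ⟨by omega, htm.2⟩
          have h2 := hpos_sum t ht'
          have h3 : 0 ≤ c * s (i t) / u := by positivity
          linarith
      rw [hcw] at hW
      rw [hsplit, hcw]
      have eE : c * D = c * D' + c * ρ := by rw [hDD']; ring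
      by_cases hiop : i (l+1) ∈ Opt
      · -- greedy picked an element of Opt
        have hSsucc : ∑ x ∈ Opt ∩ G (l+1), s x
            = ∑ x ∈ Opt ∩ G l, s x + s (i (l+1)) := by
          rw [hGsucc l]
          have hins : Opt ∩ insert (i (l+1)) (G l) = insert (i (l+1)) (Opt ∩ G l) := by
            ext y
            simp only [Finset.mem_inter, Finset.mem_insert]
            constructor
            · rintro ⟨hyO, h | h⟩
              · exact Or.inl h
              · exact Or.inr ⟨hyO, h⟩
            · rintro (h | ⟨h1, h2⟩)
              · exact ⟨h ▸ hiop, Or.inl h⟩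
              · exact ⟨h1, Or.inr h2⟩
          rw [hins, Finset.sum_insert (fun hmem' => hiGl (Finset.mem_inter.mp hmem').2)]
          ring
        have hden : γ - ∑ x ∈ Opt ∩ G (l+1), s x = u - s0 := by
          rw [hSsucc, hud, hs0d]; ring
        have hIH0 := ihn (l+1) (by omega)
        rw [hden] at hIH0
        have hIH : (1 - Pa) * Ψ' ≤ c * D' := hIH0
        have hΨeq : f (Opt ∪ G (l+1)) = f (Opt ∪ G l) := by
          rw [hGsucc l, Finset.union_insert,
            Finset.insert_eq_self.mpr (Finset.mem_union_left _ hiop)]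
        have hΨ'eqn : Ψ' = Ψ - ρ := by
          rw [hΨ'd, hΨd, hρd, hΨeq]; ring
        have hsum_key : s0 + ∑ t ∈ Finset.Ico (l+1+1) (j+1), s (i t) ≤ u := by
          rw [← hsum_split]; exact hsum_l
        have hkey : (1 - c) * s0 / u ≤ (1 - c * s0 / u) * Pb - (1 - s0 / u) * Pa :=
          greedy_key c u s0 (Finset.Ico (l+1+1) (j+1)) (fun t => s (i t)) hc0 hc1
            hs0pos hu
            (fun t ht => by
              have htm := Finset.mem_Ico.mp ht
              exact hiposI t (by omega) (by omega)) hsum_key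
        have hkey' : (1 - c) * w ≤ (1 - c * w) * Pb - (1 - w) * Pa := by
          rw [hwd, ← mul_div_assoc, ← mul_div_assoc]
          exact hkey
        have hρΨ : ρ ≤ Ψ := by
          have := hΨ'0
          rw [hΨ'eqn] at this
          linarith
        by_cases hbr : 1 - Pa ≤ c
        · -- KEY branch
          have h5 : (c - (1 - Pa)) * (w * Ψ) ≤ (c - (1 - Pa)) * ρ :=
            mul_le_mul_of_nonneg_left hwΨ (by linarith)
          have pt : 1 - (1 - c * w) * Pb ≤ (c - (1 - Pa)) * w + (1 - Pa) := by
            linarith [hkey']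
          have pt2 : (1 - (1 - c * w) * Pb) * Ψ
              ≤ ((c - (1 - Pa)) * w + (1 - Pa)) * Ψ :=
            mul_le_mul_of_nonneg_right pt hΨ0
          have eB : (1 - Pa) * Ψ' = (1 - Pa) * Ψ - (1 - Pa) * ρ := by
            rw [hΨ'eqn]; ring
          linarith [pt2, h5, hIH, eB, eE]
        · -- cΨ branch
          push_neg at hbr
          have h6 : c * (Ψ - ρ) ≤ (1 - Pa) * (Ψ - ρ) :=
            mul_le_mul_of_nonneg_right (le_of_lt hbr) (by linarith)
          have h8 : (1 - (1 - c * w) * Pb) * Ψ ≤ c * Ψ :=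
            mul_le_mul_of_nonneg_right (by linarith) hΨ0
          have eB : (1 - Pa) * Ψ' = (1 - Pa) * Ψ - (1 - Pa) * ρ := by
            rw [hΨ'eqn]; ring
          linarith [hIH, h6, h8, eB, eE]
      · -- greedy element not in Opt
        have hSsucc : ∑ x ∈ Opt ∩ G (l+1), s x = ∑ x ∈ Opt ∩ G l, s x := by
          rw [hGsucc l]
          have hins : Opt ∩ insert (i (l+1)) (G l) = Opt ∩ G l := by
            ext y
            simp only [Finset.mem_inter, Finset.mem_insert]
            constructor
            · rintro ⟨hyO, h | h⟩
              · exact absurd (h ▸ hyO) hiop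
              · exact ⟨hyO, h⟩
            · rintro ⟨h1, h2⟩
              exact ⟨h1, Or.inr h2⟩
          rw [hins]
        have hden : γ - ∑ x ∈ Opt ∩ G (l+1), s x = u := by
          rw [hSsucc, hud]
        have hIH0 := ihn (l+1) (by omega)
        rw [hden] at hIH0
        have hIH : (1 - Pb) * Ψ' ≤ c * D' := hIH0
        have hiOG : i (l+1) ∉ Opt ∪ G l := by
          simp only [Finset.mem_union]
          push_neg
          exact ⟨hiop, hiGl⟩
        have hins : Opt ∪ G (l+1) = insert (i (l+1)) (Opt ∪ G l) := by
          rw [hGsucc l, Finset.union_insert]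
        have hcv1 : (1-c) * f {i (l+1)} ≤ f (Opt ∪ G (l+1)) - f (Opt ∪ G l) := by
          rw [hins]
          exact hcurvB (Opt ∪ G l) (i (l+1)) hOGN hiN hiOG
        have hsg : f (G (l+1)) - f (G l) ≤ f {i (l+1)} := by
          rw [hGsucc l]
          exact hsingle (G l) (i (l+1)) hGlN hiN hiGl
        have hcv2 : (1-c) * (f (G (l+1)) - f (G l)) ≤ (1-c) * f {i (l+1)} :=
          mul_le_mul_of_nonneg_left hsg hc1'
        have hΨ'lb : Ψ - c * ρ ≤ Ψ' := by
          rw [hΨd, hρd, hΨ'd]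
          linarith [hcv1, hcv2]
        have e3 : (1 - Pb) * (Ψ - c * ρ) ≤ (1 - Pb) * Ψ' :=
          mul_le_mul_of_nonneg_left hΨ'lb (by linarith)
        have e5 : (c * Pb) * (w * Ψ) ≤ (c * Pb) * ρ :=
          mul_le_mul_of_nonneg_left hwΨ (mul_nonneg hc0.le hPb0)
        linarith [hIH, e3, e5, eE]
  -- conclude
  have hfin := main j 0 (by omega)
  rw [hG0] at hfin
  simp only [Finset.union_empty, Finset.inter_empty, Finset.sum_empty, hnorm,
    sub_zero, zero_add] at hfin
  have hIcc : Finset.Ico 1 (j+1) = Finset.Icc 1 j := by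
    ext x
    simp [Finset.mem_Ico, Finset.mem_Icc, Nat.lt_succ_iff]
  rw [hIcc] at hfin
  have h2 : 1/c * ((1 - ∏ m ∈ Finset.Icc 1 j, (1 - c * s (i m) / γ)) * f Opt)
      ≤ 1/c * (c * f (G j)) :=
    mul_le_mul_of_nonneg_left hfin (by positivity)
  have h3 : 1/c * (c * f (G j)) = f (G j) := by
    field_simp
  rw [ge_iff_le]
  calc (1 / c) * (1 - ∏ m ∈ Finset.Icc 1 j, (1 - c * s (i m) / γ)) * f Opt
      = 1/c * ((1 - ∏ m ∈ Finset.Icc 1 j, (1 - c * s (i m) / γ)) * f Opt) := by ring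
    _ ≤ 1/c * (c * f (G j)) := h2
    _ = f (G j) := h3
end

section
/- Approximation guarantee of AGreedy (Theorem): Let c ∈ (0,1] and let AG be the output of the alternative greedy algorithm (which returns either the maximal greedy prefix G_k fitting the knapsack, or the first non-fitting item {i_{k+1}} — the latter exactly when f(G_k ∪ {i_{k+1}}) - f(G_k) > f(G_k)). Then f(AG) ≥ ((1-x)/(2-(2-c)x))·f(Opt), where x is the unique root in [0,1] of (1/c)(1 - e^{-cz}) = (1-z)/(2-(2-c)z). -/
open Finset

lemma ag_marg_mono {ι : Type*} [DecidableEq ι] (N : Finset ι) (f : Finset ι → ℝ)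
    (hsub : ∀ A B : Finset ι, A ⊆ N → B ⊆ N → f A + f B ≥ f (A ∪ B) + f (A ∩ B))
    {A B : Finset ι} {x : ι} (hAB : A ⊆ B) (hBN : B ⊆ N) (hxN : x ∈ N) (hxB : x ∉ B) :
    f (insert x B) - f B ≤ f (insert x A) - f A := by
  have h := hsub (insert x A) B (Finset.insert_subset hxN (hAB.trans hBN)) hBN
  rw [Finset.insert_union, Finset.union_eq_right.mpr hAB,
    Finset.insert_inter_of_notMem hxB, Finset.inter_eq_left.mpr hAB] at h
  linarith

lemma ag_tele {ι : Type*} [DecidableEq ι] (N : Finset ι) (f : Finset ι → ℝ)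
    (hsub : ∀ A B : Finset ι, A ⊆ N → B ⊆ N → f A + f B ≥ f (A ∪ B) + f (A ∩ B)) :
    ∀ T : Finset ι, T ⊆ N → ∀ B : Finset ι, B ⊆ N →
      f (B ∪ T) ≤ f B + ∑ x ∈ T, (f (insert x B) - f B) := by
  intro T
  induction T using Finset.induction_on with
  | empty => intro _ B _; simp
  | @insert y T' hy ih =>
    intro hTN B hBN
    rw [Finset.union_insert, Finset.sum_insert hy]
    have hT'N : T' ⊆ N := (Finset.subset_insert y T').trans hTN
    have hyN : y ∈ N := hTN (mem_insert_self y T')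
    have ihB := ih hT'N B hBN
    by_cases hyB : y ∈ B ∪ T'
    · rw [Finset.insert_eq_self.mpr hyB]
      have : y ∈ B := (Finset.mem_union.mp hyB).resolve_right hy
      rw [Finset.insert_eq_self.mpr this]
      linarith
    · have hstep : f (insert y (B ∪ T')) - f (B ∪ T') ≤ f (insert y B) - f B :=
        ag_marg_mono N f hsub subset_union_left (union_subset hBN hT'N) hyN hyB
      linarith

lemma ag_core {s b c δ U : ℝ} (hs : 0 < s) (hb : 0 < b) (hc : 0 ≤ c) (hδ : 0 ≤ δ)
    (h : s * U ≤ b * δ) : U * (1 - Real.exp (-(c * (s / b)))) ≤ c * δ := by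
  have hw : 0 ≤ c * (s / b) := mul_nonneg hc (div_nonneg hs.le hb.le)
  have h1 : 1 - Real.exp (-(c * (s / b))) ≤ c * (s / b) := by
    nlinarith [Real.add_one_le_exp (-(c * (s / b)))]
  have h2 : 0 ≤ 1 - Real.exp (-(c * (s / b))) := by
    nlinarith [Real.exp_le_one_iff.mpr (show -(c * (s / b)) ≤ 0 by linarith)]
  rcases le_or_gt U 0 with hU | hU
  · have l1 : U * (1 - Real.exp (-(c * (s / b)))) ≤ 0 := mul_nonpos_of_nonpos_of_nonneg hU h2
    have l2 : 0 ≤ c * δ := mul_nonneg hc hδ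
    linarith
  · have c1 : U * (1 - Real.exp (-(c * (s / b)))) ≤ U * (c * (s / b)) :=
      mul_le_mul_of_nonneg_left h1 hU.le
    have c2 : U * (c * (s / b)) = c * ((s * U) / b) := by ring
    have c3 : c * ((s * U) / b) ≤ c * ((b * δ) / b) :=
      mul_le_mul_of_nonneg_left ((div_le_div_iff_of_pos_right hb).mpr h) hc
    have c4 : (b * δ) / b = δ := by field_simp
    nlinarith [c1, c3]

lemma ag_out {a b s c δ U : ℝ} (hs : 0 < s) (hb : 0 < b) (hc : 0 ≤ c) (hδ : 0 ≤ δ)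
    (h : s * U ≤ b * δ) :
    (U - c * δ) * Real.exp (-(c * ((a - s) / b))) ≤ U * Real.exp (-(c * (a / b))) := by
  have hsplit : Real.exp (-(c * (a / b))) =
      Real.exp (-(c * ((a - s) / b))) * Real.exp (-(c * (s / b))) := by
    rw [← Real.exp_add]
    congr 1
    field_simp
    ring
  have hEpos := Real.exp_pos (-(c * ((a - s) / b)))
  have hcore := ag_core hs hb hc hδ h
  have hlin : U - c * δ ≤ U * Real.exp (-(c * (s / b))) := by nlinarith [hcore]
  calc (U - c * δ) * Real.exp (-(c * ((a - s) / b)))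
      ≤ (U * Real.exp (-(c * (s / b)))) * Real.exp (-(c * ((a - s) / b))) :=
        mul_le_mul_of_nonneg_right hlin hEpos.le
    _ = U * (Real.exp (-(c * ((a - s) / b))) * Real.exp (-(c * (s / b)))) := by ring
    _ = U * Real.exp (-(c * (a / b))) := by rw [← hsplit]

set_option maxHeartbeats 1000000 in
lemma ag_in {a b s c δ U : ℝ} (hs : 0 < s) (hsb : s < b) (hsa : s ≤ a) (hab : a ≤ b)
    (hc0 : 0 ≤ c) (hc1 : c ≤ 1) (hδ : 0 ≤ δ) (h : s * U ≤ b * δ) :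
    (U - δ) * Real.exp (-(c * ((a - s) / (b - s)))) + (1 - c) * δ ≤
      U * Real.exp (-(c * (a / b))) := by
  have hb : 0 < b := hs.trans hsb
  have hbs : 0 < b - s := by linarith
  set β := (a - s) / (b - s) with hβ
  set α := a / b with hα
  have hβ0 : 0 ≤ β := div_nonneg (by linarith) hbs.le
  have hβ1 : β ≤ 1 := by rw [hβ, div_le_one hbs]; linarith
  have hβα : β ≤ α := by
    rw [hβ, hα, div_le_div_iff₀ hbs hb]
    nlinarith
  set E' := Real.exp (-(c * β)) with hE'
  set E := Real.exp (-(c * α)) with hEd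
  have hE'pos : 0 < E' := Real.exp_pos _
  have hEpos : 0 < E := Real.exp_pos _
  have hEE' : E ≤ E' := Real.exp_le_exp.mpr (by nlinarith)
  have hE'c : 1 - c ≤ E' := by
    have h1 := Real.add_one_le_exp (-(c * β))
    have h2 : c * β ≤ c := by nlinarith
    rw [hE']
    nlinarith
  have hid : α - β = (s / b) * (1 - β) := by
    rw [hα, hβ]
    field_simp
    ring
  have hsplit : E = E' * Real.exp (-(c * (α - β))) := by
    rw [hEd, hE', ← Real.exp_add]
    congr 1
    ring
  have h3 : E' - E ≤ c * ((s / b) * (1 - β)) * E' := by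
    rw [hsplit, ← hid]
    have h4 : 1 - Real.exp (-(c * (α - β))) ≤ c * (α - β) := by
      nlinarith [Real.add_one_le_exp (-(c * (α - β)))]
    nlinarith [hE'pos]
  have h4 : c * (1 - β) * E' ≤ E' - (1 - c) := by
    have hkey : (1 - c) ≤ E' * (1 - c + c * β) := by
      have he := Real.add_one_le_exp (-(c * β))
      have hcβ0 : 0 ≤ c * β := mul_nonneg hc0 hβ0
      have hcβ : c * β ≤ c := by nlinarith
      have hnn : (0:ℝ) ≤ 1 - c + c * β := by linarith
      nlinarith [mul_le_mul_of_nonneg_right he hnn]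
    nlinarith
  have hmain : U * (E' - E) ≤ δ * (E' - (1 - c)) := by
    rcases le_or_gt U 0 with hU | hU
    · have l1 : U * (E' - E) ≤ 0 := mul_nonpos_of_nonpos_of_nonneg hU (by linarith)
      have l2 : 0 ≤ δ * (E' - (1 - c)) := mul_nonneg hδ (by linarith)
      linarith
    · have hσ : 0 ≤ s / b := div_nonneg hs.le hb.le
      have c1 : U * (E' - E) ≤ U * (c * ((s / b) * (1 - β)) * E') :=
        mul_le_mul_of_nonneg_left h3 hU.le
      have c2 : U * (c * ((s / b) * (1 - β)) * E') ≤ U * ((s / b) * (E' - (1 - c))) := by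
        have hm := mul_le_mul_of_nonneg_left h4 (mul_nonneg hU.le hσ)
        nlinarith [hm]
      have c3 : U * ((s / b) * (E' - (1 - c))) ≤ δ * (E' - (1 - c)) := by
        have hco : 0 ≤ E' - (1 - c) := by linarith
        have hd : (s * U) / b ≤ δ := by rw [div_le_iff₀ hb]; linarith
        have := mul_le_mul_of_nonneg_right hd hco
        have hexp : (s * U) / b * (E' - (1 - c)) = U * ((s / b) * (E' - (1 - c))) := by
          field_simp
        rw [hexp] at this
        linarith
      linarith
  nlinarith [hmain]


set_option maxHeartbeats 2000000 in
/-- Theorem: approximation guarantee of AGreedy. -/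
theorem agreedy_approximation {ι : Type*} [DecidableEq ι]
    (N : Finset ι) (hN : N.Nonempty) (s : ι → ℝ) (f : Finset ι → ℝ)
    (γ c : ℝ) (k : ℕ) (i : ℕ → ι) (G : ℕ → Finset ι) (Opt AG : Finset ι)
    (hγ : 0 < γ) (hc0 : 0 < c) (hc1 : c ≤ 1)
    (hspos : ∀ x ∈ N, 0 < s x)
    (hnorm : f ∅ = 0)
    (hmono : ∀ A B : Finset ι, A ⊆ B → B ⊆ N → f A ≤ f B)
    (hsub : ∀ A B : Finset ι, A ⊆ N → B ⊆ N → f A + f B ≥ f (A ∪ B) + f (A ∩ B))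
    (hfpos : ∀ x ∈ N, 0 < f {x})
    (hc : c = 1 - N.inf' hN (fun x => (f N - f (N.erase x)) / f {x}))
    (hG0 : G 0 = ∅)
    (hGsucc : ∀ j : ℕ, G (j + 1) = insert (i (j + 1)) (G j))
    (hmem : ∀ j : ℕ, 1 ≤ j → j ≤ k + 1 → i j ∈ N \ G (j - 1))
    (hfit : ∀ j : ℕ, 1 ≤ j → j ≤ k + 1 → s (i j) ≤ γ)
    (hGkfit : ∑ x ∈ G k, s x ≤ γ)
    (hnofit : γ < (∑ x ∈ G k, s x) + s (i (k + 1)))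
    (hgreedy : ∀ j : ℕ, 1 ≤ j → j ≤ k + 1 → ∀ x ∈ N \ G (j - 1), s x ≤ γ →
      (f (insert x (G (j - 1))) - f (G (j - 1))) / s x ≤
      (f (insert (i j) (G (j - 1))) - f (G (j - 1))) / s (i j))
    (hOptsub : Opt ⊆ N) (hOptfeas : ∑ x ∈ Opt, s x ≤ γ)
    (hOptopt : ∀ B : Finset ι, B ⊆ N → ∑ x ∈ B, s x ≤ γ → f B ≤ f Opt)
    (hne : G k ≠ Opt)
    (hAG : (f (G k) < f (insert (i (k + 1)) (G k)) - f (G k) ∧ AG = {i (k + 1)}) ∨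
           (¬ (f (G k) < f (insert (i (k + 1)) (G k)) - f (G k)) ∧ AG = G k))
    (x : ℝ) (hx : x ∈ Set.Icc (0 : ℝ) 1)
    (hxroot : (1 / c) * (1 - Real.exp (-(c * x))) = (1 - x) / (2 - (2 - c) * x)) :
    f AG ≥ (1 - x) / (2 - (2 - c) * x) * f Opt := by
  -- basic membership facts
  have hiN : ∀ j : ℕ, j ≤ k → i (j + 1) ∈ N ∧ i (j + 1) ∉ G j := by
    intro j hj
    have h := hmem (j + 1) (by omega) (by omega)
    rw [Nat.add_sub_cancel] at h
    exact Finset.mem_sdiff.mp h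
  have hGN : ∀ j : ℕ, j ≤ k → G j ⊆ N := by
    intro j
    induction j with
    | zero => intro _; rw [hG0]; exact empty_subset _
    | succ n ih =>
      intro h
      rw [hGsucc]
      exact Finset.insert_subset (hiN n (by omega)).1 (ih (by omega))
  have hGmono : ∀ j : ℕ, G j ⊆ G (j + 1) := by
    intro j; rw [hGsucc]; exact subset_insert _ _
  -- local abbreviations
  set D : ℕ → ℝ := fun t => f (G (t + 1)) - f (G t) with hD
  set A : ℕ → ℝ := fun j => ∑ t ∈ Finset.range j, (if i (t + 1) ∈ Opt then D t else 0) with hA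
  set SS : ℕ → ℝ := fun j => ∑ y ∈ G j, s y with hSS
  set PP : ℕ → ℝ := fun j => ∑ y ∈ G j ∩ Opt, s y with hPP
  set U : ℕ → ℝ := fun j => f Opt - c * f (G j) - (1 - c) * A j with hU
  set E : ℕ → ℝ := fun j => Real.exp (-(c * ((SS k - SS j) / (γ - PP j)))) with hE
  have hspos' : ∀ j : ℕ, j ≤ k → 0 < s (i (j + 1)) := fun j hj => hspos _ (hiN j hj).1
  have hDnn : ∀ j : ℕ, j ≤ k → 0 ≤ D j := by
    intro j hj
    have h1 : f (G j) ≤ f (insert (i (j + 1)) (G j)) :=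
      hmono _ _ (subset_insert _ _) (Finset.insert_subset (hiN j hj).1 (hGN j hj))
    simp only [hD, hGsucc]
    linarith
  have hfG : ∀ j : ℕ, f (G j) = ∑ t ∈ Finset.range j, D t := by
    intro j
    simp only [hD]
    rw [Finset.sum_range_sub (fun t => f (G t)), hG0, hnorm, sub_zero]
  have hfGsucc : ∀ j : ℕ, f (G (j + 1)) = f (G j) + D j := by
    intro j; simp only [hD]; ring
  have hSS0 : SS 0 = 0 := by simp [hSS, hG0]
  have hPP0 : PP 0 = 0 := by simp [hPP, hG0]
  have hA0 : A 0 = 0 := by simp [hA]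
  have hSSsucc : ∀ j : ℕ, j ≤ k → SS (j + 1) = SS j + s (i (j + 1)) := by
    intro j hj
    simp only [hSS]
    rw [hGsucc, Finset.sum_insert (hiN j hj).2]
    ring
  have hPPsucc : ∀ j : ℕ, j ≤ k →
      PP (j + 1) = PP j + (if i (j + 1) ∈ Opt then s (i (j + 1)) else 0) := by
    intro j hj
    simp only [hPP]
    rw [hGsucc]
    by_cases h : i (j + 1) ∈ Opt
    · rw [Finset.insert_inter_of_mem h,
        Finset.sum_insert (fun hmem' => (hiN j hj).2 (Finset.mem_of_mem_inter_left hmem'))]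
      simp [h]
      ring
    · rw [Finset.insert_inter_of_notMem h]
      simp [h]
  have hAsucc : ∀ j : ℕ, A (j + 1) = A j + (if i (j + 1) ∈ Opt then D j else 0) := by
    intro j
    simp only [hA]
    exact Finset.sum_range_succ _ j
  have hSSle : ∀ j m : ℕ, j + m ≤ k → SS j ≤ SS (j + m) := by
    intro j m
    induction m with
    | zero => intro _; exact le_refl _
    | succ n ih =>
      intro h
      have h1 : SS (j + n) ≤ SS (j + n + 1) := by
        rw [hSSsucc (j + n) (by omega)]
        have := hspos' (j + n) (by omega)
        linarith
      exact (ih (by omega)).trans h1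
  have hSSkle : ∀ j : ℕ, j ≤ k → SS j ≤ SS k := by
    intro j hj
    have := hSSle j (k - j) (by omega)
    rwa [Nat.add_sub_cancel' hj] at this
  have hPPle : ∀ j : ℕ, j ≤ k → PP j ≤ SS j := by
    intro j
    induction j with
    | zero => intro _; rw [hSS0, hPP0]
    | succ n ih =>
      intro h
      rw [hSSsucc n (by omega), hPPsucc n (by omega)]
      have h1 := ih (by omega)
      have h2 := hspos' n (by omega)
      by_cases ho : i (n + 1) ∈ Opt <;> simp [ho] <;> linarith
  have hPPnn : ∀ j : ℕ, j ≤ k → 0 ≤ PP j := by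
    intro j hj
    simp only [hPP]
    exact Finset.sum_nonneg fun y hy =>
      (hspos y (hGN j hj (Finset.mem_of_mem_inter_left hy))).le
  have hSSk_le : SS k ≤ γ := by simp only [hSS]; exact hGkfit
  have hbpos : ∀ j : ℕ, j < k → 0 < γ - PP j := by
    intro j hj
    have h1 := hPPle j hj.le
    have h2 := hSSkle (j + 1) hj
    have h3 : SS (j + 1) = SS j + s (i (j + 1)) := hSSsucc j hj.le
    have h4 := hspos' j hj.le
    linarith
  -- curvature facts
  have hcurv : ∀ y ∈ N, ∀ B : Finset ι, B ⊆ N → y ∉ B →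
      (1 - c) * f {y} ≤ f (insert y B) - f B := by
    intro y hyN B hBN hyB
    have h1 : (1 - c) ≤ (f N - f (N.erase y)) / f {y} := by
      rw [hc]
      have := Finset.inf'_le (fun x => (f N - f (N.erase x)) / f {x}) hyN
      linarith
    have h2 : (1 - c) * f {y} ≤ f N - f (N.erase y) :=
      (le_div_iff₀ (hfpos y hyN)).mp h1
    have h3 : f (insert y (N.erase y)) - f (N.erase y) ≤ f (insert y B) - f B :=
      ag_marg_mono N f hsub (Finset.subset_erase.mpr ⟨hBN, hyB⟩)
        (Finset.erase_subset _ _) hyN (Finset.notMem_erase _ _)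
    rw [Finset.insert_erase hyN] at h3
    linarith
  have hDle : ∀ j : ℕ, j ≤ k → D j ≤ f {i (j + 1)} := by
    intro j hj
    have h1 : f (insert (i (j + 1)) (G j)) - f (G j) ≤
        f (insert (i (j + 1)) ∅) - f ∅ :=
      ag_marg_mono N f hsub (empty_subset _) (hGN j hj) (hiN j hj).1 (hiN j hj).2
    rw [Finset.insert_empty, hnorm] at h1
    simp only [hD, hGsucc]
    linarith
  have hcurvsum : ∀ j : ℕ, j ≤ k → f Opt + (1 - c) * (f (G j) - A j) ≤ f (Opt ∪ G j) := by
    intro j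
    induction j with
    | zero =>
      intro _
      rw [hG0, hA0, hnorm, Finset.union_empty]
      simp
    | succ n ih =>
      intro h
      have ihn := ih (by omega)
      have hset : Opt ∪ G (n + 1) = insert (i (n + 1)) (Opt ∪ G n) := by
        rw [hGsucc, Finset.union_insert]
      rw [hset]
      by_cases hy : i (n + 1) ∈ Opt
      · rw [Finset.insert_eq_self.mpr (Finset.mem_union_left _ hy)]
        have hA' : A (n + 1) = A n + D n := by rw [hAsucc]; simp [hy]
        rw [hA', hfGsucc]
        linarith
      · have hyG : i (n + 1) ∉ Opt ∪ G n := by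
          simp only [Finset.mem_union, not_or]
          exact ⟨hy, (hiN n (by omega)).2⟩
        have hmarg := hcurv (i (n + 1)) (hiN n (by omega)).1 (Opt ∪ G n)
          (Finset.union_subset hOptsub (hGN n (by omega))) hyG
        have hfy : D n ≤ f {i (n + 1)} := hDle n (by omega)
        have hA' : A (n + 1) = A n := by rw [hAsucc]; simp [hy]
        have h2 : (1 - c) * D n ≤ (1 - c) * f {i (n + 1)} :=
          mul_le_mul_of_nonneg_left hfy (by linarith)
        rw [hA', hfGsucc]
        linarith
  -- the key greedy step inequality
  have hL1div : ∀ j : ℕ, j ≤ k → U j ≤ (γ - PP j) * (D j / s (i (j + 1))) := by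
    intro j hj
    have hρnn : 0 ≤ D j / s (i (j + 1)) := div_nonneg (hDnn j hj) (hspos' j hj).le
    have htele := ag_tele N f hsub Opt hOptsub (G j) (hGN j hj)
    have hcomm : f (G j ∪ Opt) = f (Opt ∪ G j) := by rw [Finset.union_comm]
    have hterm : ∀ y ∈ Opt, (f (insert y (G j)) - f (G j)) ≤
        (if y ∈ G j then 0 else s y * (D j / s (i (j + 1)))) := by
      intro y hyO
      by_cases hyG : y ∈ G j
      · rw [Finset.insert_eq_self.mpr hyG]
        simp [hyG]
      · simp only [hyG, if_false]
        have hyN : y ∈ N := hOptsub hyO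
        have hsy : s y ≤ γ := by
          have h1 : s y ≤ ∑ u ∈ Opt, s u :=
            Finset.single_le_sum (fun u hu => (hspos u (hOptsub hu)).le) hyO
          linarith
        have hg := hgreedy (j + 1) (by omega) (by omega) y
          (by rw [Nat.add_sub_cancel]; exact Finset.mem_sdiff.mpr ⟨hyN, hyG⟩) hsy
        rw [Nat.add_sub_cancel] at hg
        have hDj : (f (insert (i (j + 1)) (G j)) - f (G j)) = D j := by
          simp only [hD, hGsucc]
        rw [hDj] at hg
        have := (div_le_iff₀ (hspos y hyN)).mp hg
        linarith
    have hsum1 : ∑ y ∈ Opt, (f (insert y (G j)) - f (G j)) ≤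
        ∑ y ∈ Opt, (if y ∈ G j then 0 else s y * (D j / s (i (j + 1)))) :=
      Finset.sum_le_sum hterm
    have hsum2 : ∑ y ∈ Opt, (if y ∈ G j then 0 else s y * (D j / s (i (j + 1)))) =
        ∑ y ∈ Opt \ G j, s y * (D j / s (i (j + 1))) := by
      rw [Finset.sdiff_eq_filter, Finset.sum_filter]
      exact Finset.sum_congr rfl fun y _ => by by_cases hyG : y ∈ G j <;> simp [hyG]
    have hsum3 : ∑ y ∈ Opt \ G j, s y * (D j / s (i (j + 1))) =
        (∑ y ∈ Opt \ G j, s y) * (D j / s (i (j + 1))) := by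
      rw [Finset.sum_mul]
    have hPPj : PP j = ∑ y ∈ Opt ∩ G j, s y := by
      simp only [hPP]; rw [Finset.inter_comm]
    have hsplit : (∑ y ∈ Opt ∩ G j, s y) + ∑ y ∈ Opt \ G j, s y = ∑ y ∈ Opt, s y :=
      Finset.sum_inter_add_sum_sdiff _ _ _
    have h4 : ∑ y ∈ Opt \ G j, s y ≤ γ - PP j := by
      rw [hPPj]; linarith [hOptfeas]
    have h5 : (∑ y ∈ Opt \ G j, s y) * (D j / s (i (j + 1))) ≤
        (γ - PP j) * (D j / s (i (j + 1))) := mul_le_mul_of_nonneg_right h4 hρnn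
    have hfin := (hcomm ▸ htele).trans (by linarith [hsum1, hsum2 ▸ hsum3 ▸ h5] :
      f (G j) + ∑ y ∈ Opt, (f (insert y (G j)) - f (G j)) ≤
        f (G j) + (γ - PP j) * (D j / s (i (j + 1))))
    have hcs := hcurvsum j hj
    simp only [hU]
    linarith
  have hL1 : ∀ j : ℕ, j ≤ k → s (i (j + 1)) * U j ≤ (γ - PP j) * D j := by
    intro j hj
    have h1 := hL1div j hj
    have hs' := hspos' j hj
    have h2 := mul_le_mul_of_nonneg_left h1 hs'.le
    have h3 : s (i (j + 1)) * ((γ - PP j) * (D j / s (i (j + 1)))) = (γ - PP j) * D j := by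
      field_simp
    linarith [h3 ▸ h2]
  -- density monotonicity
  have hdstep : ∀ t : ℕ, t + 1 ≤ k → D (t + 1) / s (i (t + 2)) ≤ D t / s (i (t + 1)) := by
    intro t ht
    have hx2 := hiN (t + 1) ht
    have hxGt : i (t + 2) ∉ G t := fun hm => hx2.2 (hGmono t hm)
    have hs2 : 0 < s (i (t + 2)) := hspos _ hx2.1
    have hg := hgreedy (t + 1) (by omega) (by omega) (i (t + 2))
      (by rw [Nat.add_sub_cancel]; exact Finset.mem_sdiff.mpr ⟨hx2.1, hxGt⟩)
      (hfit (t + 2) (by omega) (by omega))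
    rw [Nat.add_sub_cancel] at hg
    have hDt : f (insert (i (t + 1)) (G t)) - f (G t) = D t := by
      simp only [hD, hGsucc]
    rw [hDt] at hg
    have hmm2 : f (insert (i (t + 2)) (G (t + 1))) - f (G (t + 1)) ≤
        f (insert (i (t + 2)) (G t)) - f (G t) :=
      ag_marg_mono N f hsub (hGmono t) (hGN (t + 1) ht) hx2.1 hx2.2
    have hDt1 : D (t + 1) = f (insert (i (t + 2)) (G (t + 1))) - f (G (t + 1)) := by
      simp only [hD, hGsucc]
    calc D (t + 1) / s (i (t + 2)) ≤ (f (insert (i (t + 2)) (G t)) - f (G t)) / s (i (t + 2)) := by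
          rw [hDt1]; exact (div_le_div_iff_of_pos_right hs2).mpr hmm2
      _ ≤ D t / s (i (t + 1)) := hg
  have hdensm : ∀ m t : ℕ, t + m ≤ k → D (t + m) / s (i (t + m + 1)) ≤ D t / s (i (t + 1)) := by
    intro m
    induction m with
    | zero => intro t _; exact le_refl _
    | succ n ih =>
      intro t h
      have h1 : D (t + n + 1) / s (i (t + n + 2)) ≤ D (t + n) / s (i (t + n + 1)) :=
        hdstep (t + n) (by omega)
      have h2 := ih t (by omega)
      have he : t + (n + 1) = t + n + 1 := by omega
      rw [he]
      exact h1.trans h2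
  have hdens : ∀ t : ℕ, t ≤ k → D k / s (i (k + 1)) ≤ D t / s (i (t + 1)) := by
    intro t ht
    have := hdensm (k - t) t (by omega)
    rwa [Nat.add_sub_cancel' ht] at this
  -- potential function argument
  have hEk : E k = 1 := by
    simp only [hE]
    rw [sub_self, zero_div, mul_zero, neg_zero, Real.exp_zero]
  have hPhiStep : ∀ j : ℕ, j < k →
      U (j + 1) * E (j + 1) + (1 - c) * A (j + 1) ≤ U j * E j + (1 - c) * A j := by
    intro j hj
    have hb := hbpos j hj
    have hs' := hspos' j hj.le
    have hδ := hDnn j hj.le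
    have hl1 := hL1 j hj.le
    have hS' := hSSsucc j hj.le
    have hEj : E j = Real.exp (-(c * ((SS k - SS j) / (γ - PP j)))) := by simp only [hE]
    by_cases hy : i (j + 1) ∈ Opt
    · have hA' : A (j + 1) = A j + D j := by rw [hAsucc]; simp [hy]
      have hP' : PP (j + 1) = PP j + s (i (j + 1)) := by rw [hPPsucc j hj.le]; simp [hy]
      have hU' : U (j + 1) = U j - D j := by
        simp only [hU]; rw [hfGsucc, hA']; ring
      by_cases hk1 : j + 1 = k
      · have hE1 : E (j + 1) = 1 := by rw [hk1]; exact hEk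
        have ha : SS k - SS j = s (i (j + 1)) := by rw [← hk1, hS']; ring
        have hcore := ag_core hs' hb hc0.le hδ hl1
        rw [hU', hA', hE1, hEj, ha]
        nlinarith [hcore]
      · have hk1' : j + 1 < k := lt_of_le_of_ne (Nat.succ_le_of_lt hj) hk1
        have hsa : s (i (j + 1)) ≤ SS k - SS j := by
          have := hSSkle (j + 1) hk1'.le
          linarith
        have hab : SS k - SS j ≤ γ - PP j := by
          have := hPPle j hj.le
          linarith [hSSk_le]
        have hsb : s (i (j + 1)) < γ - PP j := by
          have h2 : SS (j + 2) ≤ SS k := hSSkle (j + 2) (by omega)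
          have h3 : SS (j + 2) = SS (j + 1) + s (i (j + 2)) := hSSsucc (j + 1) (by omega)
          have h4 := hspos' (j + 1) (by omega)
          have h5 := hPPle j hj.le
          linarith [hSSk_le]
        have hin := ag_in (a := SS k - SS j) (b := γ - PP j) hs' hsb hsa hab hc0.le hc1 hδ hl1
        have hE1 : E (j + 1) =
            Real.exp (-(c * ((SS k - SS j - s (i (j + 1))) / (γ - PP j - s (i (j + 1)))))) := by
          simp only [hE]
          rw [hS', hP']
          have e1 : SS k - (SS j + s (i (j + 1))) = SS k - SS j - s (i (j + 1)) := by ring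
          have e2 : γ - (PP j + s (i (j + 1))) = γ - PP j - s (i (j + 1)) := by ring
          rw [e1, e2]
        rw [hU', hA', hE1, hEj]
        linarith [hin]
    · have hA' : A (j + 1) = A j := by rw [hAsucc]; simp [hy]
      have hP' : PP (j + 1) = PP j := by rw [hPPsucc j hj.le]; simp [hy]
      have hU' : U (j + 1) = U j - c * D j := by
        simp only [hU]; rw [hfGsucc, hA']; ring
      have hout := ag_out (a := SS k - SS j) (b := γ - PP j) hs' hb hc0.le hδ hl1
      have hE1 : E (j + 1) =
          Real.exp (-(c * ((SS k - SS j - s (i (j + 1))) / (γ - PP j)))) := by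
        simp only [hE]
        rw [hS', hP']
        have e1 : SS k - (SS j + s (i (j + 1))) = SS k - SS j - s (i (j + 1)) := by ring
        rw [e1]
      rw [hU', hA', hE1, hEj]
      linarith [hout]
  have hPhiMono : ∀ j : ℕ, j ≤ k →
      U j * E j + (1 - c) * A j ≤ U 0 * E 0 + (1 - c) * A 0 := by
    intro j
    induction j with
    | zero => intro _; exact le_refl _
    | succ n ih => intro h; exact (hPhiStep n (by omega)).trans (ih (by omega))
  have hFactA : f Opt - c * f (G k) ≤ Real.exp (-(c * (SS k / γ))) * f Opt := by
    have h1 := hPhiMono k le_rfl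
    have hPhik : U k * E k + (1 - c) * A k = f Opt - c * f (G k) := by
      rw [hEk]; simp only [hU]; ring
    have hU0 : U 0 = f Opt := by simp only [hU]; rw [hG0, hnorm, hA0]; ring
    have hE0 : E 0 = Real.exp (-(c * (SS k / γ))) := by
      simp only [hE]; rw [hSS0, hPP0, sub_zero, sub_zero]
    rw [hPhik, hU0, hE0, hA0] at h1
    linarith
  -- final assembly
  have hFnn : 0 ≤ f Opt := by
    have := hmono ∅ Opt (empty_subset _) hOptsub
    rwa [hnorm] at this
  have hiK := hiN k le_rfl
  have hDkdef : D k = f (insert (i (k + 1)) (G k)) - f (G k) := by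
    simp only [hD, hGsucc]
  have hAGboth : f (G k) ≤ f AG ∧ D k ≤ f AG := by
    rcases hAG with ⟨hlt, hAGeq⟩ | ⟨hnlt, hAGeq⟩
    · rw [hAGeq]
      have h2 : D k ≤ f {i (k + 1)} := hDle k le_rfl
      rw [← hDkdef] at hlt
      exact ⟨hlt.le.trans h2, h2⟩
    · rw [hAGeq]
      rw [← hDkdef] at hnlt
      exact ⟨le_refl _, not_lt.mp hnlt⟩
  have hSnn : 0 ≤ SS k := by
    simp only [hSS]
    exact Finset.sum_nonneg fun y hy => (hspos y (hGN k le_rfl hy)).le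
  rcases le_or_gt x (SS k / γ) with hxz | hxz
  · -- case z ≥ x : use Fact A
    have hEcmp : Real.exp (-(c * (SS k / γ))) ≤ Real.exp (-(c * x)) := by
      apply Real.exp_le_exp.mpr
      nlinarith
    have hm : Real.exp (-(c * (SS k / γ))) * f Opt ≤ Real.exp (-(c * x)) * f Opt :=
      mul_le_mul_of_nonneg_right hEcmp hFnn
    have h3 : f Opt - Real.exp (-(c * x)) * f Opt ≤ c * f (G k) := by linarith [hFactA]
    have h4 : (1 - Real.exp (-(c * x))) * f Opt ≤ c * f AG := by
      have := mul_le_mul_of_nonneg_left hAGboth.1 hc0.le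
      nlinarith
    rw [ge_iff_le, ← hxroot]
    have heq : 1 / c * (1 - Real.exp (-(c * x))) * f Opt =
        ((1 - Real.exp (-(c * x))) * f Opt) / c := by ring
    rw [heq, div_le_iff₀ hc0]
    linarith
  · -- case z < x : use the residual item bound
    have hzx : SS k < x * γ := (div_lt_iff₀ hγ).mp hxz
    have hz1 : SS k < γ := by nlinarith [hx.2]
    have hs' : 0 < s (i (k + 1)) := hspos _ hiK.1
    have hρnn : 0 ≤ D k / s (i (k + 1)) := div_nonneg (hDnn k le_rfl) hs'.le
    have hnofit' : γ - SS k < s (i (k + 1)) := by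
      simp only [hSS]
      linarith [hnofit]
    have hsum1 : f (G k) - A k =
        ∑ t ∈ Finset.range k, (if i (t + 1) ∈ Opt then 0 else D t) := by
      rw [hfG k]
      simp only [hA]
      rw [← Finset.sum_sub_distrib]
      exact Finset.sum_congr rfl fun t ht => by
        by_cases h : i (t + 1) ∈ Opt <;> simp [h]
    have hSP : ∀ j : ℕ, j ≤ k → SS j - PP j =
        ∑ t ∈ Finset.range j, (if i (t + 1) ∈ Opt then 0 else s (i (t + 1))) := by
      intro j
      induction j with
      | zero => intro _; rw [hSS0, hPP0]; simp
      | succ n ih =>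
        intro h
        rw [hSSsucc n (by omega), hPPsucc n (by omega), Finset.sum_range_succ, ← ih (by omega)]
        by_cases ho : i (n + 1) ∈ Opt <;> simp [ho] <;> ring
    have hterm2 : ∀ t ∈ Finset.range k,
        (if i (t + 1) ∈ Opt then 0 else s (i (t + 1))) * (D k / s (i (k + 1))) ≤
        (if i (t + 1) ∈ Opt then 0 else D t) := by
      intro t ht
      have htk : t ≤ k := by
        have := Finset.mem_range.mp ht
        omega
      by_cases ho : i (t + 1) ∈ Opt
      · simp [ho]
      · simp only [ho, if_false]
        have h1 := hdens t htk
        have h2 := hspos' t htk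
        rw [mul_comm]
        exact (le_div_iff₀ h2).mp h1
    have hFB1 : (SS k - PP k) * (D k / s (i (k + 1))) ≤ f (G k) - A k := by
      rw [hsum1, hSP k le_rfl, Finset.sum_mul]
      exact Finset.sum_le_sum hterm2
    have hFB2 := hL1div k le_rfl
    have hPPk0 := hPPnn k le_rfl
    have hUk : U k = f Opt - c * f (G k) - (1 - c) * A k := by simp only [hU]
    rw [hUk] at hFB2
    have hm1 : (1 - c) * ((SS k - PP k) * (D k / s (i (k + 1)))) ≤
        (1 - c) * (f (G k) - A k) := mul_le_mul_of_nonneg_left hFB1 (by linarith)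
    have he1 : 0 ≤ c * (PP k * (D k / s (i (k + 1)))) :=
      mul_nonneg hc0.le (mul_nonneg hPPk0 hρnn)
    have hFB3 : f Opt ≤ f (G k) + (γ - (1 - c) * SS k) * (D k / s (i (k + 1))) := by
      nlinarith [hFB2, hm1, he1]
    have h0 : (0:ℝ) < γ - SS k := by linarith
    have hcoef : 0 ≤ γ - (1 - c) * SS k := by nlinarith
    have hdd : D k / s (i (k + 1)) ≤ D k / (γ - SS k) := by
      apply div_le_div_of_nonneg_left (hDnn k le_rfl) h0
      linarith
    have hFB4 : f Opt ≤ f AG + (γ - (1 - c) * SS k) * (f AG / (γ - SS k)) := by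
      have hstep1 : (γ - (1 - c) * SS k) * (D k / s (i (k + 1))) ≤
          (γ - (1 - c) * SS k) * (D k / (γ - SS k)) := mul_le_mul_of_nonneg_left hdd hcoef
      have hstep2 : D k / (γ - SS k) ≤ f AG / (γ - SS k) :=
        (div_le_div_iff_of_pos_right h0).mpr hAGboth.2
      have hstep3 : (γ - (1 - c) * SS k) * (D k / (γ - SS k)) ≤
          (γ - (1 - c) * SS k) * (f AG / (γ - SS k)) := mul_le_mul_of_nonneg_left hstep2 hcoef
      linarith [hFB3, hAGboth.1]
    have hden2 : (0:ℝ) < 2 * γ - (2 - c) * SS k := by nlinarith [hSSk_le]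
    have h6 : f Opt * (γ - SS k) ≤ f AG * (2 * γ - (2 - c) * SS k) := by
      have h5' := mul_le_mul_of_nonneg_right hFB4 h0.le
      have hkey : (γ - (1 - c) * SS k) * (f AG / (γ - SS k)) * (γ - SS k) =
          (γ - (1 - c) * SS k) * f AG := by
        field_simp
      nlinarith [h5', hkey]
    have hx2 : (0:ℝ) < 2 - (2 - c) * x := by nlinarith [hx.1, hx.2]
    rw [ge_iff_le, div_mul_eq_mul_div, div_le_iff₀ hx2]
    have t1 : 0 ≤ (2 - (2 - c) * x) *
        (f AG * (2 * γ - (2 - c) * SS k) - f Opt * (γ - SS k)) :=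
      mul_nonneg hx2.le (by linarith [h6])
    have t2 : 0 ≤ f Opt * (c * (γ * x - SS k)) :=
      mul_nonneg hFnn (mul_nonneg hc0.le (by nlinarith))
    nlinarith [t1, t2, hden2]
end

section
/- Indispensable items are larger than their preceding greedy prefix (Lemma (i)): Suppose i_{k+1} is an indispensable item for capacity γ, i.e., in the greedy order i₁,…,i_{k+1} (items chosen by maximal marginal density among items of size ≤ γ), G_k fits the knapsack (s(G_k) ≤ γ), i_{k+1} does not fit (s(G_k) + s_{k+1} > γ), and f(G_k ∪ {i_{k+1}}) - f(G_k) > f(G_k). Then k ≥ 1 and s_{k+1} > ∑_{j=1}^{k} s_j. -/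
open Finset

/-- Lemma (i): an indispensable item is larger than its preceding greedy prefix. -/
theorem indispensable_item_large {ι : Type*} [DecidableEq ι]
    (N : Finset ι) (s : ι → ℝ) (f : Finset ι → ℝ)
    (γ : ℝ) (k : ℕ) (i : ℕ → ι) (G : ℕ → Finset ι)
    (hγ : 0 < γ)
    (hspos : ∀ x ∈ N, 0 < s x)
    (hnorm : f ∅ = 0)
    (hmono : ∀ A B : Finset ι, A ⊆ B → B ⊆ N → f A ≤ f B)
    (hsub : ∀ A B : Finset ι, A ⊆ N → B ⊆ N → f A + f B ≥ f (A ∪ B) + f (A ∩ B))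
    (hfpos : ∀ x ∈ N, 0 < f {x})
    (hG0 : G 0 = ∅)
    (hGsucc : ∀ j : ℕ, G (j + 1) = insert (i (j + 1)) (G j))
    (hmem : ∀ j : ℕ, 1 ≤ j → j ≤ k + 1 → i j ∈ N \ G (j - 1))
    (hfit : ∀ j : ℕ, 1 ≤ j → j ≤ k + 1 → s (i j) ≤ γ)
    (hGkfit : ∑ x ∈ G k, s x ≤ γ)
    (hnofit : γ < (∑ x ∈ G k, s x) + s (i (k + 1)))
    (hgreedy : ∀ j : ℕ, 1 ≤ j → j ≤ k →
      (f (insert (i (k + 1)) (G (j - 1))) - f (G (j - 1))) / s (i (k + 1)) ≤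
      (f (insert (i j) (G (j - 1))) - f (G (j - 1))) / s (i j))
    (hindis : f (G k) < f (insert (i (k + 1)) (G k)) - f (G k)) :
    1 ≤ k ∧ s (i (k + 1)) > ∑ j ∈ Finset.Icc 1 k, s (i j) := by
  have hk1 : 1 ≤ k := by
    by_contra h
    push_neg at h
    interval_cases k
    · simp only [hG0, Finset.sum_empty] at hGkfit hnofit
      have := hfit 1 le_rfl le_rfl
      linarith
  refine ⟨hk1, ?_⟩
  -- basic facts
  have hGmono : Monotone G := monotone_nat_of_le_succ (fun j => by
    rw [hGsucc]; exact subset_insert _ _)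
  have hGN : ∀ j, j ≤ k + 1 → G j ⊆ N := by
    intro j
    induction j with
    | zero => intro _; simp [hG0]
    | succ n ih =>
      intro h
      rw [hGsucc]
      have hm := hmem (n + 1) (by omega) h
      simp only [Nat.add_sub_cancel, mem_sdiff] at hm
      exact insert_subset hm.1 (ih (by omega))
  have hGkN : G k ⊆ N := hGN k (by omega)
  have hik1 : i (k + 1) ∈ N ∧ i (k + 1) ∉ G k := by
    have hm := hmem (k + 1) (by omega) le_rfl
    simpa only [Nat.add_sub_cancel, mem_sdiff] using hm
  have hsk : 0 < s (i (k + 1)) := hspos _ hik1.1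
  -- submodularity step
  have hsubm : ∀ A : Finset ι, A ⊆ G k →
      f (insert (i (k + 1)) (G k)) - f (G k) ≤ f (insert (i (k + 1)) A) - f A := by
    intro A hA
    have hAN : insert (i (k + 1)) A ⊆ N := insert_subset hik1.1 (hA.trans hGkN)
    have h1 := hsub (insert (i (k + 1)) A) (G k) hAN hGkN
    have hun : insert (i (k + 1)) A ∪ G k = insert (i (k + 1)) (G k) := by
      rw [insert_union, union_eq_right.mpr hA]
    have hin : insert (i (k + 1)) A ∩ G k = A := by
      rw [insert_inter_of_notMem hik1.2, inter_eq_left.mpr hA]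
    rw [hun, hin] at h1
    linarith
  set c : ℝ := (f (insert (i (k + 1)) (G k)) - f (G k)) / s (i (k + 1)) with hc_def
  have hfGk0 : 0 ≤ f (G k) := by
    have := hmono ∅ (G k) (empty_subset _) hGkN
    linarith [hnorm]
  have hc : 0 < c := div_pos (lt_of_le_of_lt hfGk0 hindis) hsk
  -- per-term bound
  have hterm : ∀ j ∈ Finset.range k, s (i (j + 1)) * c ≤ f (G (j + 1)) - f (G j) := by
    intro j hj
    rw [Finset.mem_range] at hj
    have hg := hgreedy (j + 1) (by omega) (by omega)
    simp only [Nat.add_sub_cancel] at hg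
    have hsj : 0 < s (i (j + 1)) := by
      have hm := hmem (j + 1) (by omega) (by omega)
      simp only [Nat.add_sub_cancel, mem_sdiff] at hm
      exact hspos _ hm.1
    have hsubj : G j ⊆ G k := hGmono (by omega)
    have h2 : c ≤ (f (insert (i (k + 1)) (G j)) - f (G j)) / s (i (k + 1)) :=
      div_le_div_of_nonneg_right (hsubm (G j) hsubj) hsk.le |>.trans_eq rfl
    have h3 : c ≤ (f (insert (i (j + 1)) (G j)) - f (G j)) / s (i (j + 1)) := h2.trans hg
    rw [le_div_iff₀ hsj] at h3
    rw [hGsucc j]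
    linarith
  -- sum
  have hsum : (∑ j ∈ Finset.range k, s (i (j + 1))) * c ≤ f (G k) := by
    have h4 : ∑ j ∈ Finset.range k, s (i (j + 1)) * c ≤
        ∑ j ∈ Finset.range k, (f (G (j + 1)) - f (G j)) := Finset.sum_le_sum hterm
    have h5 : ∑ j ∈ Finset.range k, (f (G (j + 1)) - f (G j)) = f (G k) - f (G 0) :=
      Finset.sum_range_sub (fun j => f (G j)) k
    rw [← Finset.sum_mul] at h4
    rw [h5, hG0, hnorm] at h4
    linarith
  have hIcc : ∑ j ∈ Finset.Icc 1 k, s (i j) = ∑ j ∈ Finset.range k, s (i (j + 1)) := by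
    rw [← Finset.Ico_add_one_right_eq_Icc, Finset.sum_Ico_eq_sum_range]
    simp [Nat.add_comm]
  have hfinal : f (G k) < s (i (k + 1)) * c := by
    rw [hc_def, mul_div_cancel₀ _ (ne_of_gt hsk)]
    exact hindis
  rw [hIcc]
  have := hsum.trans_lt hfinal
  exact lt_of_mul_lt_mul_right this (le_of_lt hc)
end
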